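/- arXiv:1101.3958 — 7 statements merged into one kernel-verified Lean document; each statement's English description precedes it below -/
import Mathlib

section
/- Let R be a probability measure on a measurable space Ω and let P be a probability measure on Ω with P ≪ R. Then the supremum, over all bounded measurable functions u : Ω → ℝ, of ∫ u dP − log ∫ e^u dR equals the relative entropy H(P|R) ∈ [0, ∞]. -/
open MeasureTheory Real Filter Classical
open scoped ENNReal
open scoped Topology

/-- Relative entropy `H(P|R) ∈ [0,∞]`: the integral `∫ log(dP/dR) dP` if `P ≪ R`
(with value `+∞` when `log(dP/dR)` is not `P`-integrable, which for probability
measures happens exactly when the positive part of the integral is infinite),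
and `+∞` if `P` is not absolutely continuous with respect to `R`. -/

noncomputable def relEntropy {Ω : Type*} [MeasurableSpace Ω] (P R : Measure Ω) : EReal :=
  if P ≪ R ∧ Integrable (llr P R) P then ((∫ ω, llr P R ω ∂P : ℝ) : EReal) else ⊤

section Aux

variable {Ω : Type*} [MeasurableSpace Ω] {P R : Measure Ω}



lemma my_int_of_bdd [IsFiniteMeasure P] {u : Ω → ℝ} (hu : Measurable u)
    {C : ℝ} (hC : ∀ ω, |u ω| ≤ C) : Integrable u P :=
  (integrable_const C).mono' hu.aestronglyMeasurable (ae_of_all _ fun ω => hC ω)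

lemma my_int_exp [IsFiniteMeasure R] {u : Ω → ℝ} (hu : Measurable u)
    {C : ℝ} (hC : ∀ ω, |u ω| ≤ C) : Integrable (fun ω => Real.exp (u ω)) R := by
  refine my_int_of_bdd hu.exp (C := Real.exp C) fun ω => ?_
  rw [abs_of_pos (Real.exp_pos _)]
  exact Real.exp_le_exp.2 ((le_abs_self _).trans (hC ω))

lemma my_exp_pos_int [IsProbabilityMeasure R] {u : Ω → ℝ} (hu : Measurable u)
    {C : ℝ} (hC : ∀ ω, |u ω| ≤ C) : Real.exp (-C) ≤ ∫ ω, Real.exp (u ω) ∂ R := by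
  calc Real.exp (-C) = ∫ _ω, Real.exp (-C) ∂ R := by simp
  _ ≤ ∫ ω, Real.exp (u ω) ∂ R := by
      refine integral_mono (integrable_const _) (my_int_exp hu hC) fun ω => ?_
      exact Real.exp_le_exp.2 (neg_le_of_abs_le (hC ω))

/-- key change-of-measure bound -/
lemma my_int_exp_inv_le [IsProbabilityMeasure P] [IsProbabilityMeasure R] (hPR : P ≪ R)
    {u : Ω → ℝ} (hu : Measurable u) {C : ℝ} (hC : ∀ ω, |u ω| ≤ C) :
    ∫ ω, Real.exp (u ω) * ((P.rnDeriv R ω)⁻¹).toReal ∂P ≤ ∫ ω, Real.exp (u ω) ∂ R := by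
  set g : Ω → ℝ := fun ω => ((P.rnDeriv R ω)⁻¹).toReal with hg_def
  have hg_meas : Measurable g := (Measure.measurable_rnDeriv P R).inv.ennreal_toReal
  have hg_ae : g =ᵐ[P] fun ω => (R.rnDeriv P ω).toReal := by
    filter_upwards [Measure.inv_rnDeriv hPR] with ω hω
    simp only [hg_def]
    rw [← hω]; rfl
  have hg_int : Integrable g P := (Measure.integrable_toReal_rnDeriv).congr hg_ae.symm
  have h_int : Integrable (fun ω => Real.exp (u ω) * g ω) P := by
    refine hg_int.bdd_mul (c := Real.exp C) hu.exp.aestronglyMeasurable (ae_of_all _ fun ω => ?_)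
    rw [Real.norm_eq_abs, abs_of_pos (Real.exp_pos _)]
    exact Real.exp_le_exp.2 ((le_abs_self _).trans (hC ω))
  have h_nn : 0 ≤ᵐ[P] fun ω => Real.exp (u ω) * g ω :=
    ae_of_all _ fun ω => mul_nonneg (Real.exp_pos _).le ENNReal.toReal_nonneg
  have h_exp_int : Integrable (fun ω => Real.exp (u ω)) R := my_int_exp hu hC
  rw [← ENNReal.ofReal_le_ofReal_iff (integral_nonneg fun ω => (Real.exp_pos _).le),
    ofReal_integral_eq_lintegral_ofReal h_int h_nn,
    ofReal_integral_eq_lintegral_ofReal h_exp_int (ae_of_all _ fun ω => (Real.exp_pos _).le)]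
  have hmeas : AEMeasurable (fun ω => ENNReal.ofReal (Real.exp (u ω) * g ω)) R :=
    (hu.exp.mul hg_meas).ennreal_ofReal.aemeasurable
  rw [← lintegral_rnDeriv_mul hPR hmeas]
  refine lintegral_mono fun ω => ?_
  set a := P.rnDeriv R ω
  calc a * ENNReal.ofReal (Real.exp (u ω) * g ω)
      = a * (ENNReal.ofReal (Real.exp (u ω)) * ENNReal.ofReal (a⁻¹).toReal) := by
        rw [ENNReal.ofReal_mul (Real.exp_pos _).le]
    _ ≤ a * (ENNReal.ofReal (Real.exp (u ω)) * a⁻¹) := by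
        gcongr; exact ENNReal.ofReal_toReal_le
    _ = ENNReal.ofReal (Real.exp (u ω)) * (a * a⁻¹) := by ring
    _ ≤ ENNReal.ofReal (Real.exp (u ω)) * 1 := by gcongr; exact ENNReal.mul_inv_le_one a
    _ = ENNReal.ofReal (Real.exp (u ω)) := mul_one _

lemma my_gibbs [IsProbabilityMeasure P] [IsProbabilityMeasure R] (hPR : P ≪ R)
    (hInt : Integrable (llr P R) P) {u : Ω → ℝ} (hu : Measurable u) {C : ℝ}
    (hC : ∀ ω, |u ω| ≤ C) :
    ∫ ω, u ω ∂P - Real.log (∫ ω, Real.exp (u ω) ∂ R) ≤ ∫ ω, llr P R ω ∂P := by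
  set Z := ∫ ω, Real.exp (u ω) ∂ R with hZ_def
  have hZ_pos : 0 < Z := lt_of_lt_of_le (Real.exp_pos _) (my_exp_pos_int hu hC)
  set g : Ω → ℝ := fun ω => ((P.rnDeriv R ω)⁻¹).toReal with hg_def
  have hg_meas : Measurable g := (Measure.measurable_rnDeriv P R).inv.ennreal_toReal
  have hg_ae : g =ᵐ[P] fun ω => (R.rnDeriv P ω).toReal := by
    filter_upwards [Measure.inv_rnDeriv hPR] with ω hω
    simp only [hg_def]; rw [← hω]; rfl
  have hg_int : Integrable g P := (Measure.integrable_toReal_rnDeriv).congr hg_ae.symm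
  have hψ_int : Integrable (fun ω => Real.exp (u ω) * g ω) P := by
    refine hg_int.bdd_mul (c := Real.exp C) hu.exp.aestronglyMeasurable (ae_of_all _ fun ω => ?_)
    rw [Real.norm_eq_abs, abs_of_pos (Real.exp_pos _)]
    exact Real.exp_le_exp.2 ((le_abs_self _).trans (hC ω))
  have hu_int : Integrable u P := my_int_of_bdd hu hC
  -- pointwise a.e. inequality
  have h_ae : ∀ᵐ ω ∂P, u ω - Real.log Z - llr P R ω ≤ Real.exp (u ω) * g ω / Z - 1 := by
    filter_upwards [Measure.rnDeriv_pos hPR, hPR.ae_le (Measure.rnDeriv_lt_top P R)] with ω h_pos h_lt_top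
    set a := P.rnDeriv R ω
    have hf_pos : 0 < a.toReal := ENNReal.toReal_pos h_pos.ne' h_lt_top.ne
    have hg_eq : g ω = (a.toReal)⁻¹ := by simp only [hg_def]; rw [ENNReal.toReal_inv]
    have h_t_pos : 0 < Real.exp (u ω) * g ω / Z := by
      rw [hg_eq]; positivity
    have h_log : Real.log (Real.exp (u ω) * g ω / Z) = u ω - Real.log Z - llr P R ω := by
      rw [Real.log_div (by rw [hg_eq]; positivity) hZ_pos.ne',
        Real.log_mul (Real.exp_pos _).ne' (by rw [hg_eq]; positivity),
        Real.log_exp, hg_eq, Real.log_inv, llr]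
      ring
    calc u ω - Real.log Z - llr P R ω = Real.log (Real.exp (u ω) * g ω / Z) := h_log.symm
      _ ≤ Real.exp (u ω) * g ω / Z - 1 := Real.log_le_sub_one_of_pos h_t_pos
  have h_int_le : ∫ ω, (u ω - Real.log Z - llr P R ω) ∂P
      ≤ ∫ ω, (Real.exp (u ω) * g ω / Z - 1) ∂P := by
    refine integral_mono_ae (by exact (hu_int.sub (integrable_const _)).sub hInt)
      (by exact (hψ_int.div_const _).sub (integrable_const _)) h_ae
  have h_lhs : ∫ ω, (u ω - Real.log Z - llr P R ω) ∂P
      = ∫ ω, u ω ∂P - Real.log Z - ∫ ω, llr P R ω ∂P := by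
    have h1 : Integrable (fun ω => u ω - Real.log Z) P := hu_int.sub (integrable_const _)
    rw [integral_sub h1 hInt, integral_sub hu_int (integrable_const _), integral_const]
    simp
  have h_rhs : ∫ ω, (Real.exp (u ω) * g ω / Z - 1) ∂P
      = (∫ ω, Real.exp (u ω) * g ω ∂P) / Z - 1 := by
    rw [integral_sub (hψ_int.div_const _) (integrable_const _), integral_div, integral_const]
    simp
  have h_le_one : (∫ ω, Real.exp (u ω) * g ω ∂P) / Z - 1 ≤ 0 := by
    have h2 : (∫ ω, Real.exp (u ω) * g ω ∂P) / Z ≤ 1 := by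
      rw [div_le_one hZ_pos]; exact my_int_exp_inv_le hPR hu hC
    linarith
  rw [h_lhs, h_rhs] at h_int_le
  linarith

lemma my_key_pt {t : ℝ} (ht : 0 ≤ t) : t * max (-Real.log t) 0 ≤ 1 := by
  rcases eq_or_lt_of_le ht with h | h
  · simp [← h]
  rcases le_or_gt 1 t with h1 | h1
  · have : Real.log t ≥ 0 := Real.log_nonneg h1
    have : max (-Real.log t) 0 = 0 := max_eq_right (by linarith)
    simp [this]
  · have hlog : Real.log t⁻¹ ≤ t⁻¹ - 1 := Real.log_le_sub_one_of_pos (by positivity)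
    rw [Real.log_inv] at hlog
    have hmax : max (-Real.log t) 0 ≤ t⁻¹ - 1 := by
      refine max_le hlog ?_
      have : (1:ℝ) ≤ t⁻¹ := one_le_inv_iff₀.2 ⟨h, h1.le⟩
      linarith
    calc t * max (-Real.log t) 0 ≤ t * (t⁻¹ - 1) := by
          exact mul_le_mul_of_nonneg_left hmax ht
      _ = 1 - t := by field_simp
      _ ≤ 1 := by linarith

lemma my_int_neg_llr [IsProbabilityMeasure P] [IsProbabilityMeasure R] (hPR : P ≪ R) :
    Integrable (fun ω => max (- llr P R ω) 0) P := by
  have hmeas : Measurable (fun ω => max (- llr P R ω) 0) :=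
    (measurable_llr P R).neg.max measurable_const
  refine ⟨hmeas.aestronglyMeasurable, ?_⟩
  refine (hasFiniteIntegral_iff_ofReal (f := fun ω => max (- llr P R ω) 0)
    (ae_of_all _ fun ω => le_max_right _ _)).2 ?_
  have hmeasE : AEMeasurable (fun ω => ENNReal.ofReal (max (- llr P R ω) 0)) R :=
    hmeas.ennreal_ofReal.aemeasurable
  rw [← lintegral_rnDeriv_mul hPR hmeasE]
  refine lt_of_le_of_lt ?_ (show (1:ℝ≥0∞) < ⊤ by simp)
  calc ∫⁻ ω, P.rnDeriv R ω * ENNReal.ofReal (max (- llr P R ω) 0) ∂ R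
      ≤ ∫⁻ _ω, 1 ∂ R := by
        refine lintegral_mono fun ω => ?_
        set a := P.rnDeriv R ω with ha
        rcases eq_or_ne a ∞ with h | h
        · have : llr P R ω = 0 := by
            simp [llr, ← ha, h]
          simp [this]
        · have ha_eq : a = ENNReal.ofReal a.toReal := (ENNReal.ofReal_toReal h).symm
          rw [ha_eq, ← ENNReal.ofReal_mul ENNReal.toReal_nonneg]
          calc ENNReal.ofReal (a.toReal * max (- llr P R ω) 0)
              ≤ ENNReal.ofReal 1 := by
                apply ENNReal.ofReal_le_ofReal
                exact my_key_pt (t := a.toReal) ENNReal.toReal_nonneg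
            _ = 1 := ENNReal.ofReal_one
      _ = 1 := by simp

lemma my_clamp_abs {n x : ℝ} (hn : 0 ≤ n) : |max (-n) (min n x)| ≤ |x| := by
  rw [abs_le]
  constructor
  · refine le_trans ?_ (le_max_right _ _)
    rcases le_total n x with h | h
    · rw [min_eq_left h]; linarith [abs_nonneg x]
    · rw [min_eq_right h]; exact neg_abs_le x
  · refine max_le (by linarith [abs_nonneg x]) ?_
    exact le_trans (min_le_right n x) (le_abs_self x)

lemma my_clamp_decomp {n x : ℝ} (hn : 0 ≤ n) :
    max (-n) (min n x) = min n (max x 0) - min n (max (-x) 0) := by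
  rcases le_total 0 x with h | h
  · rw [max_eq_right (neg_nonpos.2 h), min_eq_right hn, max_eq_left h, sub_zero]
    refine max_eq_right (le_min (by linarith) (by linarith))
  · rw [max_eq_left (neg_nonneg.2 h), max_eq_right h, min_eq_right hn, zero_sub]
    rcases le_total (-n) x with h2 | h2
    · rw [min_eq_right (by linarith), max_eq_right h2, min_eq_right (by linarith), neg_neg]
    · rw [min_eq_right (by linarith), max_eq_left h2, min_eq_left (by linarith)]

lemma my_pos_sub_neg (x : ℝ) : max x 0 - max (-x) 0 = x := by
  rcases le_total 0 x with h | h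
  · rw [max_eq_left h, max_eq_right (neg_nonpos.2 h), sub_zero]
  · rw [max_eq_right h, max_eq_left (neg_nonneg.2 h)]; ring

/-- The approximating element: a bounded measurable `u` whose Donsker–Varadhan value
dominates the truncated entropy integral up to a vanishing error. -/
lemma my_approx [IsProbabilityMeasure P] [IsProbabilityMeasure R] (hPR : P ≪ R) (n : ℕ) :
    ∃ u : Ω → ℝ, Measurable u ∧ (∃ C : ℝ, ∀ ω, |u ω| ≤ C) ∧
      ∫ ω, max (-(n:ℝ)) (min (n:ℝ) (llr P R ω)) ∂P - Real.log (1 + Real.exp (-(n:ℝ)))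
        ≤ ∫ ω, u ω ∂P - Real.log (∫ ω, Real.exp (u ω) ∂ R) := by
  set v : Ω → ℝ := fun ω => max (-(n:ℝ)) (min (n:ℝ) (llr P R ω)) with hv_def
  have hv_meas : Measurable v :=
    measurable_const.max (measurable_const.min (measurable_llr P R))
  set u : Ω → ℝ := fun ω => if P.rnDeriv R ω = 0 then -(n:ℝ) else v ω with hu_def
  have hu_meas : Measurable u := by
    refine Measurable.ite ?_ measurable_const hv_meas
    exact (Measure.measurable_rnDeriv P R) (measurableSet_singleton 0)
  have hn0 : (0:ℝ) ≤ (n:ℝ) := Nat.cast_nonneg n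
  have hv_bdd : ∀ ω, |v ω| ≤ (n:ℝ) := by
    intro ω
    rw [abs_le]
    exact ⟨le_max_left _ _, max_le (by linarith) (min_le_left _ _)⟩
  have hu_bdd : ∀ ω, |u ω| ≤ (n:ℝ) := by
    intro ω
    simp only [hu_def]
    split_ifs
    · rw [abs_neg, abs_of_nonneg hn0]
    · exact hv_bdd ω
  refine ⟨u, hu_meas, ⟨(n:ℝ), hu_bdd⟩, ?_⟩
  have h_ae_eq : u =ᵐ[P] v := by
    filter_upwards [Measure.rnDeriv_pos hPR] with ω hω
    simp only [hu_def, if_neg hω.ne']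
  have h_int_eq : ∫ ω, u ω ∂P = ∫ ω, v ω ∂P := integral_congr_ae h_ae_eq
  have hZ_le : ∫ ω, Real.exp (u ω) ∂ R ≤ 1 + Real.exp (-(n:ℝ)) := by
    have h_ptwise : ∀ᵐ ω ∂ R, Real.exp (u ω) ≤ (P.rnDeriv R ω).toReal + Real.exp (-(n:ℝ)) := by
      filter_upwards [Measure.rnDeriv_lt_top P R] with ω hω
      by_cases h0 : P.rnDeriv R ω = 0
      · simp only [hu_def, if_pos h0, h0]
        simp
      · simp only [hu_def, if_neg h0]
        set f := (P.rnDeriv R ω).toReal with hf_def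
        have hf_pos : 0 < f := ENNReal.toReal_pos h0 hω.ne
        have h1 : v ω ≤ max (-(n:ℝ)) (Real.log f) := by
          simp only [hv_def]
          exact max_le_max le_rfl (min_le_right _ _)
        calc Real.exp (v ω) ≤ Real.exp (max (-(n:ℝ)) (Real.log f)) := Real.exp_le_exp.2 h1
          _ = max (Real.exp (-(n:ℝ))) (Real.exp (Real.log f)) :=
              (Real.exp_monotone.map_max)
          _ = max (Real.exp (-(n:ℝ))) f := by rw [Real.exp_log hf_pos]
          _ ≤ f + Real.exp (-(n:ℝ)) :=
              max_le (le_add_of_nonneg_left hf_pos.le) (le_add_of_nonneg_right (Real.exp_pos _).le)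
    calc ∫ ω, Real.exp (u ω) ∂ R
        ≤ ∫ ω, ((P.rnDeriv R ω).toReal + Real.exp (-(n:ℝ))) ∂ R := by
          exact integral_mono_ae (my_int_exp hu_meas hu_bdd)
            (Measure.integrable_toReal_rnDeriv.add (integrable_const _)) h_ptwise
      _ = 1 + Real.exp (-(n:ℝ)) := by
          rw [integral_add Measure.integrable_toReal_rnDeriv (integrable_const _),
            Measure.integral_toReal_rnDeriv hPR]
          simp
  have hZ_pos : 0 < ∫ ω, Real.exp (u ω) ∂ R :=
    lt_of_lt_of_le (Real.exp_pos _) (my_exp_pos_int hu_meas hu_bdd)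
  have h_log : Real.log (∫ ω, Real.exp (u ω) ∂ R) ≤ Real.log (1 + Real.exp (-(n:ℝ))) :=
    Real.log_le_log hZ_pos hZ_le
  rw [h_int_eq]
  linarith

end Aux

/-- The supremum over all bounded measurable `u : Ω → ℝ` of
`∫ u dP − log ∫ e^u dR` equals the relative entropy `H(P|R)`. -/
theorem sup_bounded_measurable_eq_relEntropy {Ω : Type*} [MeasurableSpace Ω]
    (P R : Measure Ω) [IsProbabilityMeasure P] [IsProbabilityMeasure R] (hPR : P ≪ R) :
    sSup {x : EReal | ∃ u : Ω → ℝ, Measurable u ∧ (∃ C : ℝ, ∀ ω, |u ω| ≤ C) ∧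
        x = ((∫ ω, u ω ∂P - Real.log (∫ ω, Real.exp (u ω) ∂ R) : ℝ) : EReal)} =
      relEntropy P R := by
  have h_low : ∀ n : ℕ,
      ((∫ ω, max (-(n:ℝ)) (min (n:ℝ) (llr P R ω)) ∂P
          - Real.log (1 + Real.exp (-(n:ℝ))) : ℝ) : EReal)
        ≤ sSup {x : EReal | ∃ u : Ω → ℝ, Measurable u ∧ (∃ C : ℝ, ∀ ω, |u ω| ≤ C) ∧
            x = ((∫ ω, u ω ∂P - Real.log (∫ ω, Real.exp (u ω) ∂ R) : ℝ) : EReal)} := by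
    intro n
    obtain ⟨u, hu, hb, hle⟩ := my_approx hPR n
    exact le_trans (EReal.coe_le_coe_iff.2 hle) (le_sSup ⟨u, hu, hb, rfl⟩)
  by_cases hInt : Integrable (llr P R) P
  · rw [relEntropy, if_pos ⟨hPR, hInt⟩]
    refine le_antisymm (sSup_le ?_) ?_
    · rintro x ⟨u, hu, ⟨C, hC⟩, rfl⟩
      exact EReal.coe_le_coe_iff.2 (my_gibbs hPR hInt hu hC)
    · have h1 : Tendsto (fun n : ℕ => ∫ ω, max (-(n:ℝ)) (min (n:ℝ) (llr P R ω)) ∂P)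
          atTop (𝓝 (∫ ω, llr P R ω ∂P)) := by
        refine tendsto_integral_of_dominated_convergence (fun ω => |llr P R ω|)
          (fun n => (measurable_const.max
            (measurable_const.min (measurable_llr P R))).aestronglyMeasurable)
          hInt.abs (fun n => ae_of_all _ fun ω => ?_) (ae_of_all _ fun ω => ?_)
        · rw [Real.norm_eq_abs]; exact my_clamp_abs (Nat.cast_nonneg n)
        · refine tendsto_atTop_of_eventually_const (i₀ := ⌈|llr P R ω|⌉₊) fun n hn => ?_
          have h2 : |llr P R ω| ≤ (n:ℝ) := le_trans (Nat.le_ceil _) (Nat.cast_le.2 hn)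
          rw [min_eq_right (le_trans (le_abs_self _) h2),
            max_eq_right (le_trans (neg_le_neg h2) (neg_abs_le _))]
      have h2 : Tendsto (fun n : ℕ => Real.log (1 + Real.exp (-(n:ℝ)))) atTop (𝓝 0) := by
        have h3 : Tendsto (fun n : ℕ => 1 + Real.exp (-(n:ℝ))) atTop (𝓝 1) := by
          have h0 := Real.tendsto_exp_neg_atTop_nhds_zero.comp
            (tendsto_natCast_atTop_atTop (R := ℝ))
          simpa using tendsto_const_nhds.add h0
        have h4 := (Real.continuousAt_log one_ne_zero).tendsto.comp h3
        simpa [Function.comp_def] using h4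
      have h5 : Tendsto (fun n : ℕ => ((∫ ω, max (-(n:ℝ)) (min (n:ℝ) (llr P R ω)) ∂P
          - Real.log (1 + Real.exp (-(n:ℝ))) : ℝ) : EReal)) atTop
          (𝓝 ((∫ ω, llr P R ω ∂P : ℝ) : EReal)) := by
        rw [EReal.tendsto_coe]
        simpa using h1.sub h2
      exact le_of_tendsto h5 (Eventually.of_forall h_low)
  · rw [relEntropy, if_neg fun h => hInt h.2]
    rw [sSup_eq_top]
    intro b hb
    induction b using EReal.rec with
    | bot =>
        obtain ⟨u, hu, hbnd, _⟩ := my_approx hPR 0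
        exact ⟨_, ⟨u, hu, hbnd, rfl⟩, EReal.bot_lt_coe _⟩
    | top => exact absurd hb (lt_irrefl _)
    | coe r =>
        set p : Ω → ℝ := fun ω => max (llr P R ω) 0 with hp_def
        set m : Ω → ℝ := fun ω => max (- llr P R ω) 0 with hm_def
        have hp_meas : Measurable p := (measurable_llr P R).max measurable_const
        have hm_meas : Measurable m := (measurable_llr P R).neg.max measurable_const
        have hm_int : Integrable m P := my_int_neg_llr hPR
        set K := ∫ ω, m ω ∂P with hK_def
        have hp_not : ¬ Integrable p P := by
          intro hp
          exact hInt ((hp.sub hm_int).congr (ae_of_all _ fun ω => my_pos_sub_neg (llr P R ω)))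
        have hp_top : ∫⁻ ω, ENNReal.ofReal (p ω) ∂P = ∞ := by
          by_contra h
          exact hp_not ⟨hp_meas.aestronglyMeasurable,
            (hasFiniteIntegral_iff_ofReal (ae_of_all _ fun ω => le_max_right _ _)).2
              (lt_top_iff_ne_top.2 h)⟩
        have h_sup : (⨆ n : ℕ, ∫⁻ ω, ENNReal.ofReal (min (n:ℝ) (p ω)) ∂P) = ∞ := by
          calc (⨆ n : ℕ, ∫⁻ ω, ENNReal.ofReal (min (n:ℝ) (p ω)) ∂P)
              = ∫⁻ ω, ⨆ n : ℕ, ENNReal.ofReal (min (n:ℝ) (p ω)) ∂P := by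
                refine (lintegral_iSup
                  (fun n => (measurable_const.min hp_meas).ennreal_ofReal) ?_).symm
                intro a b hab ω
                exact ENNReal.ofReal_le_ofReal (min_le_min (Nat.cast_le.2 hab) le_rfl)
            _ = ∫⁻ ω, ENNReal.ofReal (p ω) ∂P := by
                refine lintegral_congr fun ω => ?_
                refine le_antisymm (iSup_le fun n => ENNReal.ofReal_le_ofReal
                  (min_le_right _ _)) (le_iSup_of_le ⌈p ω⌉₊ ?_)
                rw [min_eq_right (Nat.le_ceil _)]
            _ = ∞ := hp_top
        set c := max (r + 1 + K) 0 with hc_def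
        have hc : ENNReal.ofReal c < ⨆ n : ℕ, ∫⁻ ω, ENNReal.ofReal (min (n:ℝ) (p ω)) ∂P := by
          rw [h_sup]; exact ENNReal.ofReal_lt_top
        obtain ⟨n, hn⟩ := lt_iSup_iff.1 hc
        have hn0 : (0:ℝ) ≤ (n:ℝ) := Nat.cast_nonneg n
        have hq_nonneg : ∀ ω, 0 ≤ min (n:ℝ) (p ω) :=
          fun ω => le_min hn0 (le_max_right _ _)
        have hL_ne : ∫⁻ ω, ENNReal.ofReal (min (n:ℝ) (p ω)) ∂P ≠ ∞ := by
          refine ne_top_of_le_ne_top (b := ENNReal.ofReal (n:ℝ)) ENNReal.ofReal_ne_top ?_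
          calc ∫⁻ ω, ENNReal.ofReal (min (n:ℝ) (p ω)) ∂P
              ≤ ∫⁻ _ω, ENNReal.ofReal (n:ℝ) ∂P :=
                lintegral_mono fun ω => ENNReal.ofReal_le_ofReal (min_le_left _ _)
            _ = ENNReal.ofReal (n:ℝ) := by simp
        have hq_int : Integrable (fun ω => min (n:ℝ) (p ω)) P := by
          refine my_int_of_bdd (measurable_const.min hp_meas) (C := (n:ℝ)) fun ω => ?_
          rw [abs_of_nonneg (hq_nonneg ω)]
          exact min_le_left _ _
        have hq'_int : Integrable (fun ω => min (n:ℝ) (m ω)) P := by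
          refine my_int_of_bdd (measurable_const.min hm_meas) (C := (n:ℝ)) fun ω => ?_
          rw [abs_of_nonneg (le_min hn0 (le_max_right _ _))]
          exact min_le_left _ _
        have hq_eq : ∫ ω, min (n:ℝ) (p ω) ∂P
            = (∫⁻ ω, ENNReal.ofReal (min (n:ℝ) (p ω)) ∂P).toReal := by
          rw [integral_eq_lintegral_of_nonneg_ae (ae_of_all _ hq_nonneg)
            (measurable_const.min hp_meas).aestronglyMeasurable]
        have hq_gt : r + 1 + K < ∫ ω, min (n:ℝ) (p ω) ∂P := by
          rw [hq_eq]
          have h6 : c < (∫⁻ ω, ENNReal.ofReal (min (n:ℝ) (p ω)) ∂P).toReal := by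
            have h7 := (ENNReal.toReal_lt_toReal ENNReal.ofReal_ne_top hL_ne).2 hn
            rwa [ENNReal.toReal_ofReal (le_max_right _ _)] at h7
          exact lt_of_le_of_lt (le_max_left _ _) h6
        obtain ⟨u, hu, hbnd, hle⟩ := my_approx hPR n
        refine ⟨_, ⟨u, hu, hbnd, rfl⟩, ?_⟩
        rw [EReal.coe_lt_coe_iff]
        refine lt_of_lt_of_le ?_ hle
        have hv_eq : ∫ ω, max (-(n:ℝ)) (min (n:ℝ) (llr P R ω)) ∂P
            = ∫ ω, min (n:ℝ) (p ω) ∂P - ∫ ω, min (n:ℝ) (m ω) ∂P := by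
          rw [← integral_sub hq_int hq'_int]
          exact integral_congr_ae (ae_of_all _ fun ω => my_clamp_decomp (Nat.cast_nonneg n))
        have hm_le : ∫ ω, min (n:ℝ) (m ω) ∂P ≤ K :=
          integral_mono hq'_int hm_int fun ω => min_le_right _ _
        have hlog_le : Real.log (1 + Real.exp (-(n:ℝ))) ≤ 1 := by
          have h7 : Real.log (1 + Real.exp (-(n:ℝ))) ≤ (1 + Real.exp (-(n:ℝ))) - 1 :=
            Real.log_le_sub_one_of_pos (by positivity)
          have h8 : Real.exp (-(n:ℝ)) ≤ 1 := by
            rw [show (1:ℝ) = Real.exp 0 by simp]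
            exact Real.exp_le_exp.2 (by simp [hn0])
          linarith
        rw [hv_eq]
        linarith [hq_gt, hm_le, hlog_le]
end

section
/- Let R be a probability measure on a measurable space Ω and let P be a finite signed measure on Ω which is NOT a probability measure absolutely continuous with respect to R (i.e., either the negative part of P is nonzero, or P is a nonnegative measure of total mass different from 1, or P is a probability measure that is not absolutely continuous with respect to R). Then the supremum, over all bounded measurable functions u : Ω → ℝ, of ∫ u dP − log ∫ e^u dR equals +∞. -/
open MeasureTheory Real Filter Classical
open scoped ENNReal

/-- For a finite signed measure `P` (with Jordan decomposition `P = P⁺ − P⁻`) and a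
bounded measurable `u`, the signed integral `∫ u dP` is `∫ u dP⁺ − ∫ u dP⁻`.
If `P` is not a probability measure absolutely continuous with respect to the
probability measure `R` — that is, either its negative part `P⁻` is nonzero, or `P` is a
nonnegative measure (`P⁻ = 0`) of total mass different from `1`, or `P` is a probability
measure (`P⁻ = 0` and `P⁺(Ω) = 1`) which is not absolutely continuous with respect
to `R` — then the supremum over all bounded measurable `u : Ω → ℝ` of
`∫ u dP − log ∫ e^u dR` is `+∞`. -/
theorem sup_bounded_measurable_eq_top_of_not_prob_ac {Ω : Type*} [MeasurableSpace Ω]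
    (R : Measure Ω) [IsProbabilityMeasure R] (P : SignedMeasure Ω)
    (h : P.toJordanDecomposition.negPart ≠ 0 ∨
        (P.toJordanDecomposition.negPart = 0 ∧
          P.toJordanDecomposition.posPart Set.univ ≠ 1) ∨
        (P.toJordanDecomposition.negPart = 0 ∧
          P.toJordanDecomposition.posPart Set.univ = 1 ∧
          ¬ P.toJordanDecomposition.posPart ≪ R)) :
    sSup {x : EReal | ∃ u : Ω → ℝ, Measurable u ∧ (∃ C : ℝ, ∀ ω, |u ω| ≤ C) ∧
        x = ((∫ ω, u ω ∂P.toJordanDecomposition.posPart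
              - ∫ ω, u ω ∂P.toJordanDecomposition.negPart
              - Real.log (MeasureTheory.integral R (fun ω => Real.exp (u ω))) : ℝ) : EReal)} = ⊤ := by
  rw [sSup_eq_top]
  intro b hb
  obtain ⟨r, hbr, -⟩ := EReal.exists_between_coe_real hb
  set μ := P.toJordanDecomposition.posPart with hμdef
  set ν := P.toJordanDecomposition.negPart with hνdef
  suffices h' : ∃ u : Ω → ℝ, Measurable u ∧ (∃ C : ℝ, ∀ ω, |u ω| ≤ C) ∧
      r ≤ ∫ ω, u ω ∂μ - ∫ ω, u ω ∂ν - Real.log (MeasureTheory.integral R (fun ω => Real.exp (u ω))) by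
    obtain ⟨u, hu, hC, hr⟩ := h'
    exact ⟨_, ⟨u, hu, hC, rfl⟩, lt_of_lt_of_le hbr (EReal.coe_le_coe_iff.2 hr)⟩
  rcases h with h1 | ⟨h2, h2'⟩ | ⟨h3, h3', h3''⟩
  · -- case 1 : negative part nonzero
    have hsing := P.toJordanDecomposition.mutuallySingular
    set s := hsing.nullSet with hsdef
    have hs : MeasurableSet s := hsing.measurableSet_nullSet
    have hμs : μ s = 0 := hsing.measure_nullSet
    have hνs : ν s ≠ 0 := by
      intro h0
      apply h1
      have : ν Set.univ = 0 := by
        have := measure_union_le (μ := ν) s sᶜ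
        rw [Set.union_compl_self, h0, hsing.measure_compl_nullSet] at this
        simpa using this
      ext t ht
      simpa using measure_mono_null (Set.subset_univ t) this
    have hc : 0 < (ν s).toReal :=
      ENNReal.toReal_pos hνs (measure_ne_top ν s)
    set c := (ν s).toReal with hcdef
    set t := max r 0 / c with htdef
    have ht0 : 0 ≤ t := div_nonneg (le_max_right r 0) hc.le
    refine ⟨s.indicator (fun _ => -t), measurable_const.indicator hs, ⟨t, ?_⟩, ?_⟩
    · intro ω
      by_cases hω : ω ∈ s <;> simp [Set.indicator_apply, hω, abs_of_nonneg ht0, ht0]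
    · have hI1 : ∫ ω, (s.indicator (fun _ => -t)) ω ∂μ = 0 := by
        rw [integral_indicator_const (-t) hs, measureReal_def, hμs]; simp
      have hI2 : ∫ ω, (s.indicator (fun _ => -t)) ω ∂ν = c * (-t) := by
        rw [integral_indicator_const (-t) hs]; simp [hcdef, mul_comm, measureReal_def]
      have hexp_le : ∀ ω, Real.exp ((s.indicator (fun _ => -t)) ω) ≤ 1 := by
        intro ω
        rw [show (1 : ℝ) = Real.exp 0 by simp]
        apply Real.exp_le_exp.2
        by_cases hω : ω ∈ s <;> simp [Set.indicator_apply, hω, ht0]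
      have hint : Integrable (fun ω => Real.exp ((s.indicator (fun _ => -t)) ω)) R := by
        refine (integrable_const (1 : ℝ)).mono' ?_ ?_
        · exact ((measurable_const.indicator hs).exp).aestronglyMeasurable
        · filter_upwards with ω
          rw [Real.norm_eq_abs, abs_of_nonneg (Real.exp_nonneg _)]
          exact hexp_le ω
      have hIle : MeasureTheory.integral R (fun ω => Real.exp ((s.indicator (fun _ => -t)) ω)) ≤ 1 := by
        calc MeasureTheory.integral R (fun ω => Real.exp ((s.indicator (fun _ => -t)) ω))
            ≤ MeasureTheory.integral R (fun _ => (1 : ℝ)) := integral_mono hint (integrable_const 1) hexp_le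
          _ = 1 := by simp
      have hlog : Real.log (MeasureTheory.integral R (fun ω => Real.exp ((s.indicator (fun _ => -t)) ω))) ≤ 0 :=
        Real.log_nonpos (integral_nonneg fun ω => (Real.exp_nonneg _)) hIle
      rw [hI1, hI2]
      have hct : c * t = max r 0 := by
        rw [htdef, mul_comm, div_mul_cancel₀ _ hc.ne']
      nlinarith [le_max_left r 0]
  · -- case 2 : negPart = 0, total mass ≠ 1
    have hcne : (μ Set.univ).toReal ≠ 1 := by
      exact fun hc => h2' ((ENNReal.toReal_eq_one_iff _).1 hc)
    set c := (μ Set.univ).toReal with hcdef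
    set t := max r 0 / (c - 1) with htdef
    refine ⟨fun _ => t, measurable_const, ⟨|t|, fun ω => le_refl _⟩, ?_⟩
    have hI1 : ∫ _, t ∂μ = c * t := by rw [integral_const]; simp [hcdef, mul_comm, measureReal_def]
    have hI2 : ∫ _, t ∂ν = 0 := by rw [h2]; simp
    have hI3 : MeasureTheory.integral R (fun _ => Real.exp t) = Real.exp t := by
      rw [integral_const]; simp
    rw [hI1, hI2, hI3, Real.log_exp]
    have : c * t - t = max r 0 := by
      have h1 : c - 1 ≠ 0 := sub_ne_zero.2 hcne
      rw [show c * t - t = (c - 1) * t by ring, htdef, mul_div_assoc', mul_div_right_comm, div_self h1, one_mul]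
    linarith [le_max_left r 0]
  · -- case 3 : probability measure not absolutely continuous
    rw [Measure.AbsolutelyContinuous] at h3''
    push_neg at h3''
    obtain ⟨s0, hRs0, hμs0⟩ := h3''
    set A := toMeasurable R s0 with hAdef
    have hA : MeasurableSet A := measurableSet_toMeasurable R s0
    have hRA : R A = 0 := by rwa [measure_toMeasurable]
    have hμA : μ A ≠ 0 := by
      intro h0
      exact hμs0 (measure_mono_null (subset_toMeasurable R s0) h0)
    have ha : 0 < (μ A).toReal := ENNReal.toReal_pos hμA (measure_ne_top μ A)
    set a := (μ A).toReal with hadef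
    set t := max r 0 / a with htdef
    have ht0 : 0 ≤ t := div_nonneg (le_max_right r 0) ha.le
    refine ⟨A.indicator (fun _ => t), measurable_const.indicator hA, ⟨t, ?_⟩, ?_⟩
    · intro ω
      by_cases hω : ω ∈ A <;> simp [Set.indicator_apply, hω, abs_of_nonneg ht0, ht0]
    · have hI1 : ∫ ω, (A.indicator (fun _ => t)) ω ∂μ = a * t := by
        rw [integral_indicator_const t hA]; simp [hadef, mul_comm, measureReal_def]
      have hI2 : ∫ ω, (A.indicator (fun _ => t)) ω ∂ν = 0 := by rw [h3]; simp
      have hae : (fun ω => Real.exp ((A.indicator (fun _ => t)) ω)) =ᵐ[R]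
          (fun _ => (1 : ℝ)) := by
        filter_upwards [measure_eq_zero_iff_ae_notMem.1 hRA] with ω hω
        simp [Set.indicator_apply, hω]
      have hI3 : MeasureTheory.integral R (fun ω => Real.exp ((A.indicator (fun _ => t)) ω)) = 1 := by
        rw [integral_congr_ae hae]; simp
      rw [hI1, hI2, hI3, Real.log_one]
      have hat : a * t = max r 0 := by
        rw [htdef, mul_comm, div_mul_cancel₀ _ ha.ne']
      linarith [le_max_left r 0]
end

section
/- Let R be a probability measure on a measurable space Ω and let P be a probability measure on Ω with P ≪ R. Then the supremum, over all measurable functions u : Ω → ℝ that are P-essentially bounded (i.e. ‖u‖_{L^∞(P)} < ∞), of ∫ u dP − log ∫ e^u dR (where log ∫ e^u dR is taken in (−∞, ∞], with the convention that the difference is −∞ when ∫ e^u dR = ∞) equals the relative entropy H(P|R) ∈ [0, ∞]. -/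
open MeasureTheory Real Filter Classical
open scoped ENNReal

section auxDV

variable {Ω : Type*} [MeasurableSpace Ω]

/-- Change of measure: `∫⁻ e^{u - llr} dP ≤ ∫⁻ e^u dR`. -/
private lemma aux_lintegral_exp_sub_llr_le (P R : Measure Ω) [IsProbabilityMeasure P]
    [IsProbabilityMeasure R] (hPR : P ≪ R) {u : Ω → ℝ} (hu : Measurable u) :
    ∫⁻ ω, ENNReal.ofReal (Real.exp (u ω - llr P R ω)) ∂P
      ≤ ∫⁻ ω, ENNReal.ofReal (Real.exp (u ω)) ∂ R := by
  rw [← MeasureTheory.lintegral_rnDeriv_mul hPR (f := fun ω => ENNReal.ofReal (Real.exp (u ω - llr P R ω)))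
    ((hu.sub (measurable_llr P R)).exp.ennreal_ofReal).aemeasurable]
  refine lintegral_mono_ae ?_
  filter_upwards [Measure.rnDeriv_lt_top P R] with ω hlt
  rcases eq_or_ne (P.rnDeriv R ω) 0 with h0 | h0
  · simp [h0]
  · have ht : 0 < (P.rnDeriv R ω).toReal := ENNReal.toReal_pos h0 hlt.ne
    conv_lhs => rw [← ENNReal.ofReal_toReal hlt.ne]
    rw [← ENNReal.ofReal_mul ht.le]
    refine ENNReal.ofReal_le_ofReal ?_
    rw [llr_def, Real.exp_sub, Real.exp_log ht, mul_comm, div_mul_cancel₀ _ ht.ne']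

/-- Jensen's inequality for `exp`. -/
private lemma aux_jensen_exp (P : Measure Ω) [IsProbabilityMeasure P] {g : Ω → ℝ}
    (hgi : Integrable g P) (hgm : Measurable g) :
    ENNReal.ofReal (Real.exp (∫ ω, g ω ∂P)) ≤ ∫⁻ ω, ENNReal.ofReal (Real.exp (g ω)) ∂P := by
  by_cases hfin : ∫⁻ ω, ENNReal.ofReal (Real.exp (g ω)) ∂P = ⊤
  · exact hfin ▸ le_top
  set m := ∫ ω, g ω ∂P with hm
  have hint : Integrable (fun ω => Real.exp (g ω)) P := by
    refine ⟨hgm.exp.aestronglyMeasurable, ?_⟩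
    rw [hasFiniteIntegral_iff_ofReal (Eventually.of_forall fun ω => (Real.exp_pos _).le)]
    exact lt_top_iff_ne_top.2 hfin
  have key : Real.exp m ≤ ∫ ω, Real.exp (g ω) ∂P := by
    have hptw : ∀ ω, Real.exp m * (1 + (g ω - m)) ≤ Real.exp (g ω) := by
      intro ω
      have h1 := Real.add_one_le_exp (g ω - m)
      have h2 : Real.exp m * (1 + (g ω - m)) ≤ Real.exp m * Real.exp (g ω - m) :=
        mul_le_mul_of_nonneg_left (by linarith) (Real.exp_pos m).le
      calc Real.exp m * (1 + (g ω - m)) ≤ Real.exp m * Real.exp (g ω - m) := h2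
        _ = Real.exp (g ω) := by rw [← Real.exp_add]; ring_nf
    have hli : Integrable (fun ω => Real.exp m * (1 + (g ω - m))) P := by
      have : Integrable (fun ω => 1 + (g ω - m)) P :=
        (integrable_const (1 : ℝ)).add (hgi.sub (integrable_const m))
      exact this.const_mul _
    have := integral_mono hli hint hptw
    calc Real.exp m = Real.exp m * (1 + (m - m)) := by ring
      _ = ∫ ω, Real.exp m * (1 + (g ω - m)) ∂P := by
          rw [integral_const_mul]
          have h4 : (fun ω => 1 + (g ω - m)) = fun ω => g ω + (1 - m) := by funext ω; ring
          rw [h4, integral_add hgi (integrable_const _), integral_const, probReal_univ]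
          simp only [ENNReal.toReal_one, one_smul, ← hm]
          ring
      _ ≤ _ := this
  calc ENNReal.ofReal (Real.exp m) ≤ ENNReal.ofReal (∫ ω, Real.exp (g ω) ∂P) :=
        ENNReal.ofReal_le_ofReal key
    _ = ∫⁻ ω, ENNReal.ofReal (Real.exp (g ω)) ∂P :=
        ofReal_integral_eq_lintegral_ofReal hint
          (Eventually.of_forall fun ω => (Real.exp_pos _).le)

/-- The negative part of the log-likelihood ratio is always integrable. -/
private lemma aux_integrable_neg_llr (P R : Measure Ω) [IsProbabilityMeasure P]
    [IsProbabilityMeasure R] (hPR : P ≪ R) :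
    Integrable (fun ω => max (-(llr P R ω)) 0) P := by
  have hmeas : Measurable fun ω => max (-(llr P R ω)) 0 :=
    (measurable_llr P R).neg.max measurable_const
  refine ⟨hmeas.aestronglyMeasurable, ?_⟩
  rw [hasFiniteIntegral_iff_ofReal (Eventually.of_forall fun ω => le_max_right (-(llr P R ω)) 0)]
  have hrw : ∫⁻ ω, ENNReal.ofReal (max (-(llr P R ω)) 0) ∂P
      = ∫⁻ ω, P.rnDeriv R ω * ENNReal.ofReal (max (-(llr P R ω)) 0) ∂ R :=
    (MeasureTheory.lintegral_rnDeriv_mul hPR hmeas.ennreal_ofReal.aemeasurable).symm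
  rw [hrw]
  have hb : ∫⁻ ω, P.rnDeriv R ω * ENNReal.ofReal (max (-(llr P R ω)) 0) ∂ R
      ≤ ∫⁻ _, (1 : ℝ≥0∞) ∂ R := by
    refine lintegral_mono_ae ?_
    filter_upwards [Measure.rnDeriv_lt_top P R] with ω hlt
    rcases eq_or_ne (P.rnDeriv R ω) 0 with h0 | h0
    · simp [h0]
    · have ht : 0 < (P.rnDeriv R ω).toReal := ENNReal.toReal_pos h0 hlt.ne
      set t := (P.rnDeriv R ω).toReal with htdef
      have hkey : t * max (-(llr P R ω)) 0 ≤ 1 := by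
        have hlog : llr P R ω = Real.log t := by rw [llr_def]
        have h1 : -Real.log t ≤ t⁻¹ - 1 := by
          have := Real.log_le_sub_one_of_pos (show (0:ℝ) < t⁻¹ by positivity)
          rw [Real.log_inv] at this
          linarith
        rcases le_total (-(llr P R ω)) 0 with h | h
        · rw [max_eq_right h]; simp
        · rw [max_eq_left h, hlog]
          nlinarith [mul_le_mul_of_nonneg_left h1 ht.le, mul_inv_cancel₀ ht.ne']
      calc P.rnDeriv R ω * ENNReal.ofReal (max (-(llr P R ω)) 0)
          = ENNReal.ofReal (t * max (-(llr P R ω)) 0) := by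
            conv_lhs => rw [← ENNReal.ofReal_toReal hlt.ne]
            rw [← ENNReal.ofReal_mul ht.le]
        _ ≤ 1 := by
            rw [← ENNReal.ofReal_one]; exact ENNReal.ofReal_le_ofReal hkey
  refine lt_of_le_of_lt hb ?_
  simp

end auxDV

/-- The supremum over all measurable `u : Ω → ℝ` that are `P`-essentially bounded
(`‖u‖_{L^∞(P)} < ∞`) of `∫ u dP − log ∫ e^u dR` equals the relative entropy `H(P|R)`.
Here `log ∫ e^u dR` is taken in `(−∞,∞]` (via `ENNReal.log` of the lower integral of
`e^u`), and in `EReal` the difference is `−∞` when `∫ e^u dR = ∞`. -/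
theorem sup_essBounded_eq_relEntropy {Ω : Type*} [MeasurableSpace Ω]
    (P R : Measure Ω) [IsProbabilityMeasure P] [IsProbabilityMeasure R] (hPR : P ≪ R) :
    sSup {x : EReal | ∃ u : Ω → ℝ, Measurable u ∧ eLpNorm u ⊤ P < ⊤ ∧
        x = ((∫ ω, u ω ∂P : ℝ) : EReal)
              - ENNReal.log (∫⁻ ω, ENNReal.ofReal (Real.exp (u ω)) ∂ R)} =
      relEntropy P R := by
  set φ := llr P R with hφdef
  have hφm : Measurable φ := measurable_llr P R
  set S := {x : EReal | ∃ u : Ω → ℝ, Measurable u ∧ eLpNorm u ⊤ P < ⊤ ∧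
        x = ((∫ ω, u ω ∂P : ℝ) : EReal)
              - ENNReal.log (∫⁻ ω, ENNReal.ofReal (Real.exp (u ω)) ∂ R)} with hSdef
  refine le_antisymm ?_ ?_
  · -- Upper bound: every element of `S` is at most the relative entropy.
    refine sSup_le ?_
    rintro x ⟨u, hum, hub, rfl⟩
    rw [relEntropy]
    split_ifs with h
    swap
    · exact le_top
    obtain ⟨-, hint⟩ := h
    have huint : Integrable u P := MemLp.integrable le_top ⟨hum.aestronglyMeasurable, hub⟩
    set m := ∫ ω, u ω ∂P - ∫ ω, φ ω ∂P with hm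
    have h1 : ENNReal.ofReal (Real.exp m) ≤ ∫⁻ ω, ENNReal.ofReal (Real.exp (u ω)) ∂ R := by
      refine le_trans ?_ (aux_lintegral_exp_sub_llr_le P R hPR hum)
      have hJ := aux_jensen_exp P (g := fun ω => u ω - φ ω) (huint.sub hint) (hum.sub hφm)
      rwa [integral_sub huint hint] at hJ
    have h2 : (m : EReal) ≤ ENNReal.log (∫⁻ ω, ENNReal.ofReal (Real.exp (u ω)) ∂ R) := by
      calc (m : EReal) = ENNReal.log (ENNReal.ofReal (Real.exp m)) := by
            rw [ENNReal.log_ofReal_of_pos (Real.exp_pos m), Real.log_exp]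
        _ ≤ _ := ENNReal.log_monotone h1
    calc ((∫ ω, u ω ∂P : ℝ) : EReal)
          - ENNReal.log (∫⁻ ω, ENNReal.ofReal (Real.exp (u ω)) ∂ R)
        ≤ ((∫ ω, u ω ∂P : ℝ) : EReal) - (m : EReal) := EReal.sub_le_sub le_rfl h2
      _ = ((∫ ω, u ω ∂P - m : ℝ) : EReal) := (EReal.coe_sub _ _).symm
      _ = ((∫ ω, φ ω ∂P : ℝ) : EReal) := by rw [hm]; norm_cast; ring
  · -- Lower bound via truncations of `llr`.
    have hfpos : ∀ᵐ ω ∂P, 0 < P.rnDeriv R ω := Measure.rnDeriv_pos hPR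
    -- the truncated test functions
    set u : ℕ → Ω → ℝ := fun n ω =>
      if P.rnDeriv R ω = 0 then -(n:ℝ) else max (min (φ ω) n) (-(n:ℝ)) with hudef
    have hum : ∀ n, Measurable (u n) := by
      intro n
      exact Measurable.ite ((Measure.measurable_rnDeriv P R) (measurableSet_singleton 0))
        measurable_const ((hφm.min measurable_const).max measurable_const)
    have hubd : ∀ n, ∀ ω, ‖u n ω‖ ≤ (n:ℝ) := by
      intro n ω
      rw [Real.norm_eq_abs, abs_le]
      by_cases h0 : P.rnDeriv R ω = 0
      · simp [hudef, h0]
      · rw [hudef]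
        simp only [if_neg h0]
        constructor
        · exact le_max_right _ _
        · exact max_le (min_le_right _ _) (neg_nonpos.2 (Nat.cast_nonneg n) |>.trans
            (Nat.cast_nonneg n))
    have hu_eLp : ∀ n, eLpNorm (u n) ⊤ P < ⊤ := by
      intro n
      refine lt_of_le_of_lt (eLpNorm_le_of_ae_bound (C := (n:ℝ))
        (Eventually.of_forall (hubd n))) ?_
      simp [ENNReal.ofReal_lt_top]
    have hu_ae : ∀ n, u n =ᵐ[P] fun ω => max (min (φ ω) n) (-(n:ℝ)) := by
      intro n
      filter_upwards [hfpos] with ω hω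
      rw [hudef]; simp only [if_neg hω.ne']
    have hu_int_eq : ∀ n, ∫ ω, u n ω ∂P = ∫ ω, max (min (φ ω) n) (-(n:ℝ)) ∂P := by
      intro n; exact integral_congr_ae (hu_ae n)
    -- bound on the lintegral of exp (u n) under R
    have hRbound : ∀ n, ∫⁻ ω, ENNReal.ofReal (Real.exp (u n ω)) ∂ R
        ≤ 1 + ENNReal.ofReal (Real.exp (-(n:ℝ))) := by
      intro n
      have hptw : ∀ᵐ ω ∂ R, ENNReal.ofReal (Real.exp (u n ω))
          ≤ P.rnDeriv R ω + ENNReal.ofReal (Real.exp (-(n:ℝ))) := by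
        filter_upwards [Measure.rnDeriv_lt_top P R] with ω hlt
        by_cases h0 : P.rnDeriv R ω = 0
        · rw [hudef]; simp only [if_pos h0, h0, zero_add]; exact le_rfl
        · rw [hudef]; simp only [if_neg h0]
          have ht : 0 < (P.rnDeriv R ω).toReal := ENNReal.toReal_pos h0 hlt.ne
          have hexp : Real.exp (max (min (φ ω) n) (-(n:ℝ)))
              ≤ (P.rnDeriv R ω).toReal + Real.exp (-(n:ℝ)) := by
            have h1 : max (min (φ ω) n) (-(n:ℝ)) ≤ max (φ ω) (-(n:ℝ)) :=
              max_le_max (min_le_left _ _) le_rfl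
            have h3 : Real.exp (φ ω) = (P.rnDeriv R ω).toReal := by
              rw [hφdef, llr_def]; exact Real.exp_log ht
            have h2 : Real.exp (max (φ ω) (-(n:ℝ)))
                ≤ (P.rnDeriv R ω).toReal + Real.exp (-(n:ℝ)) := by
              rcases max_cases (φ ω) (-(n:ℝ)) with ⟨he, -⟩ | ⟨he, -⟩ <;> rw [he, ← h3]
              · exact le_add_of_nonneg_right (Real.exp_pos _).le
              · exact le_add_of_nonneg_left (Real.exp_pos _).le
            exact le_trans (Real.exp_le_exp.2 h1) h2
          calc ENNReal.ofReal (Real.exp (max (min (φ ω) n) (-(n:ℝ))))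
              ≤ ENNReal.ofReal ((P.rnDeriv R ω).toReal + Real.exp (-(n:ℝ))) :=
                ENNReal.ofReal_le_ofReal hexp
            _ = ENNReal.ofReal (P.rnDeriv R ω).toReal + ENNReal.ofReal (Real.exp (-(n:ℝ))) :=
                ENNReal.ofReal_add ENNReal.toReal_nonneg (Real.exp_pos _).le
            _ = P.rnDeriv R ω + ENNReal.ofReal (Real.exp (-(n:ℝ))) := by
                rw [ENNReal.ofReal_toReal hlt.ne]
      calc ∫⁻ ω, ENNReal.ofReal (Real.exp (u n ω)) ∂ R
          ≤ ∫⁻ ω, (P.rnDeriv R ω + ENNReal.ofReal (Real.exp (-(n:ℝ)))) ∂ R :=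
            lintegral_mono_ae hptw
        _ = (∫⁻ ω, P.rnDeriv R ω ∂ R) + ENNReal.ofReal (Real.exp (-(n:ℝ))) * R Set.univ := by
            rw [lintegral_add_right _ measurable_const, lintegral_const]
        _ = 1 + ENNReal.ofReal (Real.exp (-(n:ℝ))) := by
            rw [Measure.lintegral_rnDeriv hPR, measure_univ, measure_univ, mul_one]
    have hlogb : ∀ n, ENNReal.log (∫⁻ ω, ENNReal.ofReal (Real.exp (u n ω)) ∂ R)
        ≤ ((Real.log (1 + Real.exp (-(n:ℝ)))) : EReal) := by
      intro n
      calc ENNReal.log (∫⁻ ω, ENNReal.ofReal (Real.exp (u n ω)) ∂ R)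
          ≤ ENNReal.log (1 + ENNReal.ofReal (Real.exp (-(n:ℝ)))) :=
            ENNReal.log_monotone (hRbound n)
        _ = ((Real.log (1 + Real.exp (-(n:ℝ)))) : EReal) := by
            rw [show (1:ℝ≥0∞) + ENNReal.ofReal (Real.exp (-(n:ℝ)))
                = ENNReal.ofReal (1 + Real.exp (-(n:ℝ))) by
              rw [ENNReal.ofReal_add zero_le_one (Real.exp_pos _).le, ENNReal.ofReal_one]]
            exact ENNReal.log_ofReal_of_pos (by positivity)
    -- the lower bound elements
    have hmem : ∀ n : ℕ,
        ((∫ ω, max (min (φ ω) n) (-(n:ℝ)) ∂P - Real.log (1 + Real.exp (-(n:ℝ))) : ℝ) : EReal)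
          ≤ sSup S := by
      intro n
      have hxS : (((∫ ω, u n ω ∂P : ℝ) : EReal)
          - ENNReal.log (∫⁻ ω, ENNReal.ofReal (Real.exp (u n ω)) ∂ R)) ∈ S :=
        ⟨u n, hum n, hu_eLp n, rfl⟩
      refine le_trans ?_ (le_sSup hxS)
      rw [← hu_int_eq n, EReal.coe_sub]
      exact EReal.sub_le_sub le_rfl (hlogb n)
    by_cases hint : Integrable φ P
    · rw [relEntropy, if_pos ⟨hPR, hint⟩]
      refine le_of_tendsto (x := atTop) ?_ (Eventually.of_forall hmem)
      rw [show (((∫ ω, φ ω ∂P : ℝ)) : EReal) = (((∫ ω, φ ω ∂P - 0 : ℝ)) : EReal) by rw [sub_zero]]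
      refine EReal.tendsto_coe.2 (Tendsto.sub ?_ ?_)
      · -- dominated convergence
        refine tendsto_integral_of_dominated_convergence (fun ω => |φ ω|)
          (fun n => ((hφm.min measurable_const).max measurable_const).aestronglyMeasurable)
          hint.abs ?_ ?_
        · intro n
          refine Eventually.of_forall fun ω => ?_
          rw [Real.norm_eq_abs, abs_le]
          constructor
          · refine le_max_of_le_left (le_min (neg_abs_le _) ?_)
            exact le_trans (neg_nonpos.2 (abs_nonneg _)) (Nat.cast_nonneg n)
          · exact max_le ((min_le_left _ _).trans (le_abs_self _))
              ((neg_nonpos.2 (Nat.cast_nonneg n)).trans (abs_nonneg _))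
        · refine Eventually.of_forall fun ω => ?_
          refine Tendsto.congr' ?_ (tendsto_const_nhds (x := φ ω))
          filter_upwards [eventually_ge_atTop ⌈|φ ω|⌉₊] with n hn
          have hge : |φ ω| ≤ (n:ℝ) := le_trans (Nat.le_ceil _) (Nat.cast_le.2 hn)
          rw [min_eq_left (le_trans (le_abs_self _) hge),
            max_eq_left (le_trans (neg_le_neg hge) (neg_abs_le _))]
      · -- log (1 + exp (-n)) → 0
        have h1 : Tendsto (fun n : ℕ => Real.exp (-(n:ℝ))) atTop (nhds 0) :=
          Real.tendsto_exp_atBot.comp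
            (tendsto_neg_atBot_iff.2 tendsto_natCast_atTop_atTop)
        have h2 : Tendsto (fun n : ℕ => 1 + Real.exp (-(n:ℝ))) atTop (nhds 1) := by
          simpa using tendsto_const_nhds.add h1
        have h3 := ((Real.continuousAt_log one_ne_zero).tendsto.comp h2)
        simpa [Real.log_one, Function.comp_def] using h3
    · -- non-integrable case: the supremum is `⊤`
      rw [relEntropy, if_neg fun h => hint h.2]
      refine top_le_iff.2 ?_
      by_contra hne
      have hlt : sSup S < ⊤ := lt_top_iff_ne_top.2 hne
      obtain ⟨M, hM, -⟩ := EReal.exists_between_coe_real hlt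
      -- the positive part of llr has infinite integral
      have hnegint : Integrable (fun ω => max (-(φ ω)) 0) P := aux_integrable_neg_llr P R hPR
      set c := ∫ ω, max (-(φ ω)) 0 ∂P with hc
      have hpos_top : ∫⁻ ω, ENNReal.ofReal (max (φ ω) 0) ∂P = ⊤ := by
        by_contra hptop
        refine hint ⟨hφm.aestronglyMeasurable, ?_⟩
        rw [hasFiniteIntegral_iff_norm]
        have habs : ∀ ω, ENNReal.ofReal ‖φ ω‖
            = ENNReal.ofReal (max (φ ω) 0) + ENNReal.ofReal (max (-(φ ω)) 0) := by
          intro ω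
          rw [← ENNReal.ofReal_add (le_max_right _ _) (le_max_right _ _)]
          congr 1
          rw [Real.norm_eq_abs]
          rcases le_total (φ ω) 0 with h | h
          · rw [abs_of_nonpos h, max_eq_right h, max_eq_left (by linarith)]; ring
          · rw [abs_of_nonneg h, max_eq_left h, max_eq_right (by linarith)]; ring
        rw [lintegral_congr habs, lintegral_add_left (hφm.max measurable_const).ennreal_ofReal]
        have hCfin : ∫⁻ ω, ENNReal.ofReal (max (-(φ ω)) 0) ∂P < ⊤ := by
          have := hnegint.2
          rwa [hasFiniteIntegral_iff_ofReal
            (Eventually.of_forall fun ω => le_max_right (-(φ ω)) 0)] at this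
        exact ENNReal.add_lt_top.2 ⟨lt_top_iff_ne_top.2 hptop, hCfin⟩
      -- monotone convergence for the truncated positive parts
      set B : ℕ → ℝ≥0∞ := fun n => ∫⁻ ω, ENNReal.ofReal (min (max (φ ω) 0) (n:ℝ)) ∂P with hB
      have hBsup : ⨆ n, B n = ⊤ := by
        have hmono : Monotone fun n : ℕ => fun ω => ENNReal.ofReal (min (max (φ ω) 0) (n:ℝ)) := by
          intro a b hab ω
          exact ENNReal.ofReal_le_ofReal (min_le_min le_rfl (Nat.cast_le.2 hab))
        rw [← MeasureTheory.lintegral_iSup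
          (fun n => ((hφm.max measurable_const).min measurable_const).ennreal_ofReal) hmono]
        rw [← hpos_top]
        refine lintegral_congr fun ω => ?_
        refine le_antisymm (iSup_le fun n => ENNReal.ofReal_le_ofReal (min_le_left _ _)) ?_
        refine le_iSup_of_le ⌈max (φ ω) 0⌉₊ ?_
        rw [min_eq_left (Nat.le_ceil _)]
      -- pick a large n
      set K := max (M + c + Real.log 2) 0 with hK
      have hKB : ENNReal.ofReal K < ⨆ n, B n := by rw [hBsup]; exact ENNReal.ofReal_lt_top
      obtain ⟨n, hn⟩ := lt_iSup_iff.1 hKB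
      have hBfin : B n ≠ ⊤ := by
        have hle : B n ≤ ∫⁻ _, ENNReal.ofReal (n:ℝ) ∂P :=
          lintegral_mono fun ω => ENNReal.ofReal_le_ofReal (min_le_right _ _)
        refine (lt_of_le_of_lt hle ?_).ne
        rw [lintegral_const, measure_univ, mul_one]
        exact ENNReal.ofReal_lt_top
      have hbn : K < (B n).toReal := by
        have := ENNReal.toReal_strict_mono hBfin hn
        rwa [ENNReal.toReal_ofReal (le_max_right _ _)] at this
      -- identify (B n).toReal with the integral of the truncated positive part
      have hmin_meas : Measurable fun ω => min (max (φ ω) 0) (n:ℝ) :=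
        (hφm.max measurable_const).min measurable_const
      have hmin_nonneg : ∀ ω, 0 ≤ min (max (φ ω) 0) (n:ℝ) := fun ω =>
        le_min (le_max_right _ _) (Nat.cast_nonneg n)
      have hbn_eq : ∫ ω, min (max (φ ω) 0) (n:ℝ) ∂P = (B n).toReal := by
        rw [hB, integral_eq_lintegral_of_nonneg_ae (Eventually.of_forall hmin_nonneg)
          hmin_meas.aestronglyMeasurable]
      -- integrability of the truncations
      have hmin_int : Integrable (fun ω => min (max (φ ω) 0) (n:ℝ)) P := by
        refine (integrable_const (n:ℝ)).mono' hmin_meas.aestronglyMeasurable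
          (Eventually.of_forall fun ω => ?_)
        rw [Real.norm_eq_abs, abs_of_nonneg (hmin_nonneg ω)]
        exact min_le_right _ _
      have hclamp_int : Integrable (fun ω => max (min (φ ω) n) (-(n:ℝ))) P := by
        refine (integrable_const (n:ℝ)).mono'
          ((hφm.min measurable_const).max measurable_const).aestronglyMeasurable
          (Eventually.of_forall fun ω => ?_)
        rw [Real.norm_eq_abs, abs_le]
        exact ⟨le_max_right _ _, max_le (min_le_right _ _)
          ((neg_nonpos.2 (Nat.cast_nonneg n)).trans (Nat.cast_nonneg n))⟩
      -- the key pointwise inequality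
      have hptw : ∀ ω, min (max (φ ω) 0) (n:ℝ) - max (-(φ ω)) 0
          ≤ max (min (φ ω) n) (-(n:ℝ)) := by
        intro ω
        rcases le_total 0 (φ ω) with h | h
        · have h1 : max (-(φ ω)) 0 = 0 := max_eq_right (neg_nonpos.2 h)
          have h2 : max (φ ω) 0 = φ ω := max_eq_left h
          rw [h1, h2, sub_zero]
          exact le_max_left _ _
        · have h1 : max (-(φ ω)) 0 = -(φ ω) := max_eq_left (neg_nonneg.2 h)
          have h2 : max (φ ω) 0 = 0 := max_eq_right h
          have h3 : min (0:ℝ) (n:ℝ) = 0 := min_eq_left (Nat.cast_nonneg n)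
          have h4 : min (φ ω) (n:ℝ) = φ ω := min_eq_left (h.trans (Nat.cast_nonneg n))
          rw [h1, h2, h3]
          calc (0:ℝ) - -(φ ω) = φ ω := by ring
            _ ≤ max (min (φ ω) (n:ℝ)) (-(n:ℝ)) := by rw [h4]; exact le_max_left _ _
      have hintineq : (B n).toReal - c ≤ ∫ ω, max (min (φ ω) n) (-(n:ℝ)) ∂P := by
        rw [← hbn_eq, ← integral_sub hmin_int hnegint]
        exact integral_mono (hmin_int.sub hnegint) hclamp_int hptw
      -- log bound
      have hlog2 : Real.log (1 + Real.exp (-(n:ℝ))) ≤ Real.log 2 := by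
        refine Real.log_le_log (by positivity) ?_
        have : Real.exp (-(n:ℝ)) ≤ 1 :=
          Real.exp_le_one_iff.2 (neg_nonpos.2 (Nat.cast_nonneg n))
        linarith
      have hMr : M < ∫ ω, max (min (φ ω) n) (-(n:ℝ)) ∂P - Real.log (1 + Real.exp (-(n:ℝ))) := by
        have h1 : M + c + Real.log 2 ≤ K := le_max_left _ _
        nlinarith [hbn, hintineq, hlog2]
      have := lt_of_le_of_lt (le_trans (EReal.coe_le_coe_iff.2 hMr.le) (hmem n)) hM
      exact lt_irrefl _ this
end

section
/- Let R be a probability measure on a measurable space Ω and let P be a probability measure on Ω with P ≪ R. Then H(P|R) = sup { ∫ u dP − log ∫ e^u dR : u : Ω → ℝ measurable, ∫ e^u dR < ∞ and ∫ u⁻ dP < ∞ } ∈ [0, ∞], where u⁻ := max(−u, 0), so that ∫ u dP ∈ (−∞, ∞] is well-defined for each admissible u. -/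
open MeasureTheory Real Filter Classical
open scoped ENNReal

open scoped Topology

section Aux
variable {Ω : Type*} [MeasurableSpace Ω] {P R : Measure Ω}

variable {Ω : Type*} [MeasurableSpace Ω] {P R : Measure Ω}

lemma ereal_val_eq {A B : ℝ≥0∞} (hA : A ≠ ⊤) (hB : B ≠ ⊤) (z : ℝ) :
    (A : EReal) - (B : EReal) - (z : EReal) = ((A.toReal - B.toReal - z : ℝ) : EReal) := by
  have h1 : (A : EReal) = ((A.toReal : ℝ) : EReal) := by
    conv_lhs => rw [← ENNReal.ofReal_toReal hA]
    rw [EReal.coe_ennreal_ofReal, max_eq_left ENNReal.toReal_nonneg]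
  have h2 : (B : EReal) = ((B.toReal : ℝ) : EReal) := by
    conv_lhs => rw [← ENNReal.ofReal_toReal hB]
    rw [EReal.coe_ennreal_ofReal, max_eq_left ENNReal.toReal_nonneg]
  rw [h1, h2]; norm_cast

lemma lintegral_ofReal_lt_top_of_integrable {u : Ω → ℝ} (hu : Integrable u P) :
    ∫⁻ ω, ENNReal.ofReal (u ω) ∂P < ⊤ := by
  refine lt_of_le_of_lt ?_ hu.2
  apply lintegral_mono
  intro ω
  simp only [← enorm_eq_nnnorm, ← ofReal_norm]
  exact ENNReal.ofReal_le_ofReal (le_abs_self _)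

-- Jensen trick: ∫ g dP ≤ log ∫ e^g dP
lemma integral_le_log_integral_exp [IsProbabilityMeasure P] {g : Ω → ℝ}
    (hg : Integrable g P) (hexp : Integrable (fun ω => Real.exp (g ω)) P) :
    ∫ ω, g ω ∂P ≤ Real.log (∫ ω, Real.exp (g ω) ∂P) := by
  set c := Real.log (∫ ω, Real.exp (g ω) ∂P) with hc
  have hZpos : 0 < ∫ ω, Real.exp (g ω) ∂P := integral_exp_pos hexp
  have key : ∀ ω, g ω - c ≤ Real.exp (g ω - c) - 1 := fun ω => by
    have := Real.add_one_le_exp (g ω - c); linarith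
  have hexpc : Integrable (fun ω => Real.exp (g ω - c) - 1) P := by
    apply Integrable.sub _ (integrable_const 1)
    simpa [Real.exp_sub, div_eq_mul_inv] using hexp.mul_const (Real.exp c)⁻¹
  have h1 : ∫ ω, (g ω - c) ∂P ≤ ∫ ω, (Real.exp (g ω - c) - 1) ∂P :=
    integral_mono (hg.sub (integrable_const c)) hexpc key
  have h2 : ∫ ω, (Real.exp (g ω - c) - 1) ∂P = 0 := by
    rw [integral_sub (by simpa [Real.exp_sub, div_eq_mul_inv] using hexp.mul_const (Real.exp c)⁻¹) (integrable_const 1)]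
    simp only [Real.exp_sub, div_eq_mul_inv]
    rw [integral_mul_const, integral_const]
    rw [hc, Real.exp_log hZpos, mul_inv_cancel₀ hZpos.ne.symm]; simp
  rw [integral_sub hg (integrable_const c), integral_const] at h1
  simp only [measure_univ, ENNReal.toReal_one, probReal_univ, one_smul, smul_eq_mul] at h1 h2 ⊢
  linarith

lemma nnnorm_eq_ofReal_add (x : ℝ) :
    (‖x‖₊ : ℝ≥0∞) = ENNReal.ofReal x + ENNReal.ofReal (-x) := by
  rcases le_total 0 x with h | h
  · simp [ENNReal.ofReal_of_nonpos (neg_nonpos.mpr h), ← enorm_eq_nnnorm, ← ofReal_norm,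
      Real.norm_eq_abs, abs_of_nonneg h]
  · simp [ENNReal.ofReal_of_nonpos h, ← enorm_eq_nnnorm, ← ofReal_norm,
      Real.norm_eq_abs, abs_of_nonpos h]

lemma rnDeriv_smul_exp_eq (hPR : P ≪ R) (u : Ω → ℝ) (ω : Ω) :
    0 ≤ (P.rnDeriv R ω).toReal • Real.exp (u ω - llr P R ω) ∧
    (P.rnDeriv R ω).toReal • Real.exp (u ω - llr P R ω) ≤ Real.exp (u ω) := by
  set t := (P.rnDeriv R ω).toReal with ht
  have htnn : (0:ℝ) ≤ t := ENNReal.toReal_nonneg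
  simp only [llr, smul_eq_mul, ← ht]
  constructor
  · positivity
  · rcases eq_or_lt_of_le htnn with h | h
    · rw [← h]; simpa using (Real.exp_pos (u ω)).le
    · rw [Real.exp_sub, Real.exp_log h]
      rw [mul_comm, div_mul_cancel₀ _ h.ne.symm]

lemma dv_core [IsProbabilityMeasure P] [IsProbabilityMeasure R] (hPR : P ≪ R)
    (hint : Integrable (llr P R) P) {u : Ω → ℝ} (hu : Measurable u)
    (hexp : Integrable (fun ω => Real.exp (u ω)) R)
    (hneg : (∫⁻ ω, ENNReal.ofReal (-(u ω)) ∂P) < ⊤) :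
    Integrable u P ∧ Integrable (fun ω => Real.exp (u ω - llr P R ω)) P ∧
      ∫ ω, Real.exp (u ω - llr P R ω) ∂P ≤ ∫ ω, Real.exp (u ω) ∂ R := by
  have hbd := rnDeriv_smul_exp_eq (P := P) (R := R) hPR u
  have hmeasR : AEStronglyMeasurable
      (fun ω => (P.rnDeriv R ω).toReal • Real.exp (u ω - llr P R ω)) R := by
    apply AEStronglyMeasurable.smul (Measure.measurable_rnDeriv P R).ennreal_toReal.aestronglyMeasurable
    exact ((hu.sub (measurable_llr P R)).exp).aestronglyMeasurable
  have hintR : Integrable (fun ω => (P.rnDeriv R ω).toReal • Real.exp (u ω - llr P R ω)) R := by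
    apply integrable_of_le_of_le hmeasR
      (Eventually.of_forall fun ω => (hbd ω).1)
      (Eventually.of_forall fun ω => (hbd ω).2)
      (integrable_const 0) hexp
  have hexp2 : Integrable (fun ω => Real.exp (u ω - llr P R ω)) P :=
    (integrable_rnDeriv_smul_iff hPR).mp hintR
  have hZle : ∫ ω, Real.exp (u ω - llr P R ω) ∂P ≤ ∫ ω, Real.exp (u ω) ∂ R := by
    rw [← integral_rnDeriv_smul hPR]
    exact integral_mono hintR hexp fun ω => (hbd ω).2
  refine ⟨?_, hexp2, hZle⟩
  -- integrability of u
  have hptwise : ∀ ω, u ω ≤ |llr P R ω| + Real.exp (u ω - llr P R ω) := fun ω => by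
    have := Real.add_one_le_exp (u ω - llr P R ω)
    have := abs_le.mp (le_refl |llr P R ω|) -- dummy
    have h2 : llr P R ω ≤ |llr P R ω| := le_abs_self _
    linarith [Real.add_one_le_exp (u ω - llr P R ω)]
  have hposlt : ∫⁻ ω, ENNReal.ofReal (u ω) ∂P < ⊤ := by
    refine lt_of_le_of_lt (lintegral_mono fun ω =>
      ENNReal.ofReal_le_ofReal (hptwise ω)) ?_
    exact lintegral_ofReal_lt_top_of_integrable (hint.abs.add hexp2)
  refine ⟨hu.aestronglyMeasurable, ?_⟩
  show (∫⁻ ω, (‖u ω‖₊ : ℝ≥0∞) ∂P) < ⊤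
  calc ∫⁻ ω, (‖u ω‖₊ : ℝ≥0∞) ∂P
      = ∫⁻ ω, (ENNReal.ofReal (u ω) + ENNReal.ofReal (-(u ω))) ∂P := by
        simp_rw [nnnorm_eq_ofReal_add]
    _ = (∫⁻ ω, ENNReal.ofReal (u ω) ∂P) + ∫⁻ ω, ENNReal.ofReal (-(u ω)) ∂P :=
        lintegral_add_left hu.ennreal_ofReal _
    _ < ⊤ := ENNReal.add_lt_top.mpr ⟨hposlt, hneg⟩

lemma lintegral_ofReal_neg_llr_le [IsProbabilityMeasure P] [IsProbabilityMeasure R]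
    (hPR : P ≪ R) : ∫⁻ ω, ENNReal.ofReal (-(llr P R ω)) ∂P ≤ 1 := by
  have h1 : ∫⁻ ω, ENNReal.ofReal (-(llr P R ω)) ∂P
      = ∫⁻ ω, P.rnDeriv R ω * ENNReal.ofReal (-(llr P R ω)) ∂ R := by
    rw [lintegral_rnDeriv_mul hPR]
    exact (measurable_llr P R).neg.ennreal_ofReal.aemeasurable
  rw [h1]
  calc ∫⁻ ω, P.rnDeriv R ω * ENNReal.ofReal (-(llr P R ω)) ∂ R
      ≤ ∫⁻ _, 1 ∂ R := by
        apply lintegral_mono_ae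
        filter_upwards [Measure.rnDeriv_lt_top P R] with ω hω
        set t := (P.rnDeriv R ω).toReal with ht
        have htnn : 0 ≤ t := ENNReal.toReal_nonneg
        have hrw : P.rnDeriv R ω = ENNReal.ofReal t := by
          rw [ht, ENNReal.ofReal_toReal hω.ne]
        simp only [llr]
        rw [hrw, ENNReal.toReal_ofReal htnn, ← ENNReal.ofReal_mul htnn]
        rw [← ENNReal.ofReal_one]
        apply ENNReal.ofReal_le_ofReal
        rcases le_or_gt t 0 with h | h
        · have : t = 0 := le_antisymm h htnn
          simp [this]
        · have := Real.log_le_sub_one_of_pos (x := t⁻¹) (by positivity)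
          rw [Real.log_inv] at this
          nlinarith [mul_le_mul_of_nonneg_left this h.le, mul_inv_cancel₀ h.ne.symm]
    _ = 1 := by simp

lemma integrable_negpart_llr [IsProbabilityMeasure P] [IsProbabilityMeasure R]
    (hPR : P ≪ R) : Integrable (fun ω => max (-(llr P R ω)) 0) P := by
  refine ⟨((measurable_llr P R).neg.max measurable_const).aestronglyMeasurable, ?_⟩
  show (∫⁻ ω, (‖max (-(llr P R ω)) 0‖₊ : ℝ≥0∞) ∂P) < ⊤
  refine lt_of_le_of_lt ?_ (lt_of_le_of_lt (lintegral_ofReal_neg_llr_le hPR) ENNReal.one_lt_top)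
  apply lintegral_mono
  intro ω
  simp only [← enorm_eq_nnnorm, ← ofReal_norm, Real.norm_eq_abs, abs_of_nonneg (le_max_right (-(llr P R ω)) 0)]
  rcases le_total (-(llr P R ω)) 0 with h | h
  · simp [max_eq_right h]
  · simp [max_eq_left h]

lemma measure_rnDeriv_zero [IsProbabilityMeasure P] [IsProbabilityMeasure R] (hPR : P ≪ R) :
    P {ω | P.rnDeriv R ω = 0} = 0 := by
  have hs : MeasurableSet {ω | P.rnDeriv R ω = 0} :=
    Measure.measurable_rnDeriv P R (measurableSet_singleton 0)
  nth_rw 1 [← Measure.withDensity_rnDeriv_eq P R hPR]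
  rw [withDensity_apply _ hs]
  rw [setLIntegral_congr_fun hs (fun ω hω => hω)]
  simp

lemma exp_max_log_le {t : ℝ} (ht : 0 ≤ t) : Real.exp (max (Real.log t) 0) ≤ t + 1 := by
  rcases eq_or_lt_of_le ht with h | h
  · simp [← h, Real.log_zero]
  · rcases le_total (Real.log t) 0 with h2 | h2
    · rw [max_eq_right h2]; simpa using ht
    · rw [max_eq_left h2, Real.exp_log h]; linarith

lemma ofReal_clip (x : ℝ) (n : ℕ) :
    ENNReal.ofReal (min (max x 0) n) = min (ENNReal.ofReal x) n := by
  rcases le_total x 0 with h | h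
  · rw [max_eq_right h, min_eq_left (by positivity : (0:ℝ) ≤ (n:ℝ))]
    simp [ENNReal.ofReal_of_nonpos h]
  · rw [max_eq_left h]
    rcases le_total x (n:ℝ) with h2 | h2
    · rw [min_eq_left h2, min_eq_left]
      rw [← ENNReal.ofReal_natCast n]
      exact ENNReal.ofReal_le_ofReal h2
    · rw [min_eq_right h2, min_eq_right, ENNReal.ofReal_natCast]
      rw [← ENNReal.ofReal_natCast n]
      exact ENNReal.ofReal_le_ofReal h2

end Aux

/-- `H(P|R) = sup { ∫ u dP − log ∫ e^u dR : u measurable, ∫ e^u dR < ∞, ∫ u⁻ dP < ∞ }`.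
For admissible `u`, `∫ u dP ∈ (−∞,∞]` is well-defined; it is encoded in `EReal` as
`∫⁻ u⁺ dP − ∫⁻ u⁻ dP`, where the subtracted (negative-part) term is finite. -/
theorem relEntropy_eq_sup_integrable_exp_negPart {Ω : Type*} [MeasurableSpace Ω]
    (P R : Measure Ω) [IsProbabilityMeasure P] [IsProbabilityMeasure R] (hPR : P ≪ R) :
    relEntropy P R =
      sSup {x : EReal | ∃ u : Ω → ℝ, Measurable u ∧
        Integrable (fun ω => Real.exp (u ω)) R ∧
        (∫⁻ ω, ENNReal.ofReal (-(u ω)) ∂P) < ⊤ ∧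
        x = ((∫⁻ ω, ENNReal.ofReal (u ω) ∂P : ℝ≥0∞) : EReal)
              - ((∫⁻ ω, ENNReal.ofReal (-(u ω)) ∂P : ℝ≥0∞) : EReal)
              - ((Real.log (MeasureTheory.integral R (fun ω => Real.exp (u ω))) : ℝ) : EReal)} := by
  have hval : ∀ u : Ω → ℝ, Integrable u P → ∀ z : ℝ,
      ((∫⁻ ω, ENNReal.ofReal (u ω) ∂P : ℝ≥0∞) : EReal)
        - ((∫⁻ ω, ENNReal.ofReal (-(u ω)) ∂P : ℝ≥0∞) : EReal) - ((z : ℝ) : EReal)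
      = ((∫ ω, u ω ∂P - z : ℝ) : EReal) := by
    intro u hu z
    rw [ereal_val_eq (lintegral_ofReal_lt_top_of_integrable hu).ne
      (lintegral_ofReal_lt_top_of_integrable (u := fun ω => -(u ω)) hu.neg).ne]
    rw [integral_eq_lintegral_pos_part_sub_lintegral_neg_part hu]
  apply le_antisymm
  · -- relEntropy ≤ sSup : construction
    set v : ℕ → Ω → ℝ := fun n ω => max (min (llr P R ω) n) (-(n : ℝ)) with hvdef
    set u : ℕ → Ω → ℝ := fun n ω => if P.rnDeriv R ω = 0 then -(n : ℝ) else v n ω with hudef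
    have hs0 : MeasurableSet {ω | P.rnDeriv R ω = 0} :=
      Measure.measurable_rnDeriv P R (measurableSet_singleton 0)
    have hvmeas : ∀ n, Measurable (v n) := fun n =>
      ((measurable_llr P R).min measurable_const).max measurable_const
    have humeas : ∀ n, Measurable (u n) := fun n =>
      Measurable.ite hs0 measurable_const (hvmeas n)
    have huv : ∀ n, u n =ᵐ[P] v n := by
      intro n
      have hsub : {ω | ¬ u n ω = v n ω} ⊆ {ω | P.rnDeriv R ω = 0} := by
        intro ω hω
        by_contra hf
        exact hω (if_neg hf)
      exact measure_mono_null hsub (measure_rnDeriv_zero hPR)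
    have hvabs : ∀ n ω, |v n ω| ≤ |llr P R ω| := by
      intro n ω
      rw [abs_le]
      constructor
      · rcases le_total (llr P R ω) 0 with h | h
        · calc -|llr P R ω| = llr P R ω := by rw [abs_of_nonpos h]; ring
            _ ≤ min (llr P R ω) n ⊔ -(n:ℝ) := le_max_of_le_left (le_min (le_refl _) (h.trans (Nat.cast_nonneg n)))
        · calc -|llr P R ω| ≤ 0 := neg_nonpos.mpr (abs_nonneg _)
            _ ≤ min (llr P R ω) n ⊔ -(n:ℝ) := le_max_of_le_left (le_min h (Nat.cast_nonneg n))
      · apply max_le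
        · rcases le_total (llr P R ω) 0 with h | h
          · exact (min_le_left _ _).trans (h.trans (abs_nonneg _))
          · exact (min_le_left _ _).trans (le_abs_self _)
        · calc -(n:ℝ) ≤ 0 := neg_nonpos.mpr (Nat.cast_nonneg n)
            _ ≤ |llr P R ω| := abs_nonneg _
    have hvbd : ∀ n ω, |v n ω| ≤ (n : ℝ) := by
      intro n ω
      rw [abs_le]
      exact ⟨le_max_right _ _, max_le (min_le_right _ _) (neg_le_self (Nat.cast_nonneg n))⟩
    have hvint : ∀ n, Integrable (v n) P := fun n =>
      Integrable.mono' (integrable_const (n : ℝ)) (hvmeas n).aestronglyMeasurable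
        (Eventually.of_forall fun ω => by rw [Real.norm_eq_abs]; exact hvbd n ω)
    have huint : ∀ n, Integrable (u n) P := fun n => (hvint n).congr (huv n).symm
    have hub : ∀ n ω, Real.exp (u n ω) ≤ (P.rnDeriv R ω).toReal + 1 := by
      intro n ω
      by_cases hf : P.rnDeriv R ω = 0
      · simp only [hudef, if_pos hf]
        calc Real.exp (-(n:ℝ)) ≤ Real.exp 0 := Real.exp_le_exp.mpr (neg_nonpos.mpr (Nat.cast_nonneg n))
          _ = 1 := Real.exp_zero
          _ ≤ _ := by have := ENNReal.toReal_nonneg (a := P.rnDeriv R ω); linarith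
      · simp only [hudef, if_neg hf]
        calc Real.exp (v n ω) ≤ Real.exp (max (llr P R ω) 0) := by
              apply Real.exp_le_exp.mpr
              apply max_le ((min_le_left _ _).trans (le_max_left _ _))
              calc -(n:ℝ) ≤ 0 := neg_nonpos.mpr (Nat.cast_nonneg n)
                _ ≤ _ := le_max_right _ _
          _ ≤ (P.rnDeriv R ω).toReal + 1 := by
              simp only [llr]
              exact exp_max_log_le ENNReal.toReal_nonneg
    have hrnint : Integrable (fun ω => (P.rnDeriv R ω).toReal + 1) R :=
      (Measure.integrable_toReal_rnDeriv).add (integrable_const 1)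
    have hexpu : ∀ n, Integrable (fun ω => Real.exp (u n ω)) R := by
      intro n
      exact integrable_of_le_of_le ((humeas n).exp).aestronglyMeasurable
        (Eventually.of_forall fun ω => (Real.exp_pos _).le)
        (Eventually.of_forall fun ω => hub n ω)
        (integrable_const 0) hrnint
    set Z : ℕ → ℝ := fun n => ∫ ω, Real.exp (u n ω) ∂ R with hZdef
    have hZpos : ∀ n, 0 < Z n := fun n => integral_exp_pos (hexpu n)
    have hZle2 : ∀ n, Z n ≤ 2 := by
      intro n
      calc Z n ≤ ∫ ω, ((P.rnDeriv R ω).toReal + 1) ∂ R :=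
            integral_mono (hexpu n) hrnint (hub n)
        _ = 2 := by
            rw [integral_add Measure.integrable_toReal_rnDeriv (integrable_const 1),
              Measure.integral_toReal_rnDeriv hPR]
            simp
            norm_num
    have hnegn : ∀ n, (∫⁻ ω, ENNReal.ofReal (-(u n ω)) ∂P) < ⊤ := by
      intro n
      calc ∫⁻ ω, ENNReal.ofReal (-(u n ω)) ∂P ≤ ∫⁻ _, ENNReal.ofReal (n:ℝ) ∂P := by
            apply lintegral_mono
            intro ω
            apply ENNReal.ofReal_le_ofReal
            by_cases hf : P.rnDeriv R ω = 0
            · simp [hudef, if_pos hf]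
            · simp only [hudef, if_neg hf]
              have := (abs_le.mp (hvbd n ω)).1
              linarith
        _ < ⊤ := by rw [lintegral_const]; simp [measure_univ]
    have hmem : ∀ n, ((∫ ω, u n ω ∂P - Real.log (Z n) : ℝ) : EReal) ∈
        {x : EReal | ∃ u : Ω → ℝ, Measurable u ∧
          Integrable (fun ω => Real.exp (u ω)) R ∧
          (∫⁻ ω, ENNReal.ofReal (-(u ω)) ∂P) < ⊤ ∧
          x = ((∫⁻ ω, ENNReal.ofReal (u ω) ∂P : ℝ≥0∞) : EReal)
                - ((∫⁻ ω, ENNReal.ofReal (-(u ω)) ∂P : ℝ≥0∞) : EReal)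
                - ((Real.log (∫ ω, Real.exp (u ω) ∂ R) : ℝ) : EReal)} := by
      intro n
      exact ⟨u n, humeas n, hexpu n, hnegn n, (hval (u n) (huint n) (Real.log (Z n))).symm⟩
    have hle : ∀ n, ((∫ ω, u n ω ∂P - Real.log (Z n) : ℝ) : EReal) ≤ sSup _ := fun n =>
      le_sSup (hmem n)
    by_cases hint : Integrable (llr P R) P
    · rw [relEntropy, if_pos ⟨hPR, hint⟩]
      have hIv : Tendsto (fun n => ∫ ω, v n ω ∂P) atTop (𝓝 (∫ ω, llr P R ω ∂P)) := by
        apply tendsto_integral_of_dominated_convergence (fun ω => |llr P R ω|)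
          (fun n => (hvmeas n).aestronglyMeasurable) hint.abs
        · intro n
          exact Eventually.of_forall fun ω => by
            rw [Real.norm_eq_abs]; exact hvabs n ω
        · apply Eventually.of_forall
          intro ω
          apply tendsto_atTop_of_eventually_const (i₀ := ⌈|llr P R ω|⌉₊)
          intro n hn
          have h1 : |llr P R ω| ≤ (n : ℝ) :=
            (Nat.le_ceil _).trans (by exact_mod_cast hn)
          have h2 := abs_le.mp h1
          simp only [hvdef]
          rw [min_eq_left h2.2, max_eq_left (by linarith [h2.1])]
      have hIueq : (fun n => ∫ ω, u n ω ∂P) = fun n => ∫ ω, v n ω ∂P :=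
        funext fun n => integral_congr_ae (huv n)
      have hZ1 : Tendsto Z atTop (𝓝 1) := by
        have h1 : ∫ ω, (P.rnDeriv R ω).toReal ∂ R = 1 := by
          rw [Measure.integral_toReal_rnDeriv hPR]; simp
        rw [← h1]
        apply tendsto_integral_of_dominated_convergence
          (fun ω => (P.rnDeriv R ω).toReal + 1)
          (fun n => ((humeas n).exp).aestronglyMeasurable) hrnint
        · intro n
          exact Eventually.of_forall fun ω => by
            rw [Real.norm_eq_abs, abs_of_pos (Real.exp_pos _)]; exact hub n ω
        · filter_upwards [Measure.rnDeriv_lt_top P R] with ω hω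
          by_cases hf : P.rnDeriv R ω = 0
          · simp only [hudef, if_pos hf, hf, ENNReal.toReal_zero]
            have h2 : Tendsto (fun n : ℕ => -(n : ℝ)) atTop atBot :=
              tendsto_neg_atTop_atBot.comp tendsto_natCast_atTop_atTop
            exact Real.tendsto_exp_atBot.comp h2
          · have ht : 0 < (P.rnDeriv R ω).toReal := ENNReal.toReal_pos hf hω.ne
            apply tendsto_atTop_of_eventually_const (i₀ := ⌈|llr P R ω|⌉₊)
            intro n hn
            have h1 : |llr P R ω| ≤ (n : ℝ) :=
              (Nat.le_ceil _).trans (by exact_mod_cast hn)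
            have h2 := abs_le.mp h1
            simp only [hudef, hvdef, if_neg hf]
            rw [min_eq_left h2.2, max_eq_left (by linarith [h2.1])]
            simp only [llr]
            exact Real.exp_log ht
      have hlog : Tendsto (fun n => Real.log (Z n)) atTop (𝓝 0) := by
        have h2 := (Real.continuousAt_log one_ne_zero).tendsto.comp hZ1
        simpa [Function.comp_def] using h2
      have hIu : Tendsto (fun n => ∫ ω, u n ω ∂P) atTop (𝓝 (∫ ω, llr P R ω ∂P)) := by
        rw [hIueq]; exact hIv
      have ha : Tendsto (fun n => ∫ ω, u n ω ∂P - Real.log (Z n)) atTop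
          (𝓝 (∫ ω, llr P R ω ∂P)) := by
        simpa using hIu.sub hlog
      have hcoe : Tendsto (fun n => ((∫ ω, u n ω ∂P - Real.log (Z n) : ℝ) : EReal)) atTop
          (𝓝 ((∫ ω, llr P R ω ∂P : ℝ) : EReal)) := EReal.tendsto_coe.mpr ha
      exact le_of_tendsto hcoe (Eventually.of_forall hle)
    · rw [relEntropy, if_neg (fun h => hint h.2)]
      rw [top_le_iff, sSup_eq_top]
      intro b hb
      obtain ⟨M, hbM, _⟩ := EReal.exists_between_coe_real hb
      have hposinf : ∫⁻ ω, ENNReal.ofReal (llr P R ω) ∂P = ⊤ := by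
        by_contra hfin
        apply hint
        refine ⟨(measurable_llr P R).aestronglyMeasurable, ?_⟩
        show (∫⁻ ω, (‖llr P R ω‖₊ : ℝ≥0∞) ∂P) < ⊤
        calc ∫⁻ ω, (‖llr P R ω‖₊ : ℝ≥0∞) ∂P
            = ∫⁻ ω, (ENNReal.ofReal (llr P R ω) + ENNReal.ofReal (-(llr P R ω))) ∂P := by
              simp_rw [nnnorm_eq_ofReal_add]
          _ = (∫⁻ ω, ENNReal.ofReal (llr P R ω) ∂P)
                + ∫⁻ ω, ENNReal.ofReal (-(llr P R ω)) ∂P :=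
              lintegral_add_left (measurable_llr P R).ennreal_ofReal _
          _ < ⊤ := ENNReal.add_lt_top.mpr ⟨lt_top_iff_ne_top.mpr hfin,
              lt_of_le_of_lt (lintegral_ofReal_neg_llr_le hPR) ENNReal.one_lt_top⟩
      set m : ℕ → ℝ≥0∞ := fun n => ∫⁻ ω, min (ENNReal.ofReal (llr P R ω)) n ∂P with hmdef
      have hmono : Monotone (fun n : ℕ => fun ω =>
          min (ENNReal.ofReal (llr P R ω)) (n : ℝ≥0∞)) := by
        intro i j hij ω
        exact min_le_min (le_refl _) (by exact_mod_cast Nat.cast_le.mpr hij)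
      have hmtop : (⨆ n, m n) = ⊤ := by
        simp only [hmdef]
        rw [← lintegral_iSup (fun n => (measurable_llr P R).ennreal_ofReal.min
          measurable_const) hmono]
        have hpt : ∀ ω, (⨆ n : ℕ, min (ENNReal.ofReal (llr P R ω)) (n : ℝ≥0∞))
            = ENNReal.ofReal (llr P R ω) := by
          intro ω
          apply le_antisymm (iSup_le fun n => min_le_left _ _)
          have hn : ENNReal.ofReal (llr P R ω) ≤ ((⌈llr P R ω⌉₊ : ℕ) : ℝ≥0∞) := by
            rw [← ENNReal.ofReal_natCast]
            exact ENNReal.ofReal_le_ofReal (Nat.le_ceil _)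
          exact le_iSup_of_le ⌈llr P R ω⌉₊ (le_min (le_refl _) hn)
        calc ∫⁻ ω, ⨆ n : ℕ, min (ENNReal.ofReal (llr P R ω)) (n : ℝ≥0∞) ∂P
            = ∫⁻ ω, ENNReal.ofReal (llr P R ω) ∂P := by
              apply lintegral_congr; intro ω; exact hpt ω
          _ = ⊤ := hposinf
      set C := ∫ ω, max (-(llr P R ω)) 0 ∂P with hCdef
      have hC0 : 0 ≤ C := integral_nonneg fun ω => le_max_right _ _
      set K := max (M + C + Real.log 2 + 1) 0 with hKdef
      have hK : ENNReal.ofReal K < ⨆ n, m n := by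
        rw [hmtop]; exact ENNReal.ofReal_lt_top
      obtain ⟨n, hn⟩ := lt_iSup_iff.mp hK
      refine ⟨_, hmem n, ?_⟩
      have hmfin : m n ≠ ⊤ := by
        apply ne_of_lt
        calc m n ≤ ∫⁻ _, (n : ℝ≥0∞) ∂P := lintegral_mono fun ω => min_le_right _ _
          _ < ⊤ := by rw [lintegral_const]; simp [measure_univ]
      have hKlt : K < (m n).toReal := by
        have h2 := (ENNReal.toReal_lt_toReal ENNReal.ofReal_ne_top hmfin).mpr hn
        rwa [ENNReal.toReal_ofReal (le_max_right _ _)] at h2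
      have hminint : Integrable (fun ω => min (max (llr P R ω) 0) (n : ℝ)) P := by
        apply Integrable.mono' (integrable_const (n : ℝ))
          (((measurable_llr P R).max measurable_const).min measurable_const).aestronglyMeasurable
        apply Eventually.of_forall
        intro ω
        rw [Real.norm_eq_abs, abs_of_nonneg (le_min (le_max_right _ _) (Nat.cast_nonneg n))]
        exact min_le_right _ _
      have h2 : ∫ ω, min (max (llr P R ω) 0) (n : ℝ) ∂P = (m n).toReal := by
        rw [integral_eq_lintegral_of_nonneg_ae
          (f := fun ω => min (max (llr P R ω) 0) (n : ℝ))
          (Eventually.of_forall fun ω => le_min (le_max_right _ _) (Nat.cast_nonneg n))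
          (((measurable_llr P R).max measurable_const).min measurable_const).aestronglyMeasurable]
        congr 1
        apply lintegral_congr
        intro ω
        exact ofReal_clip (llr P R ω) n
      have hptwise : ∀ ω, min (max (llr P R ω) 0) (n : ℝ) - max (-(llr P R ω)) 0 ≤ v n ω := by
        intro ω
        rcases le_total (llr P R ω) 0 with h | h
        · rw [max_eq_right h, max_eq_left (by linarith), min_eq_left (Nat.cast_nonneg n)]
          simp only [hvdef]
          calc 0 - -llr P R ω = llr P R ω := by ring
            _ ≤ min (llr P R ω) n ⊔ -(n:ℝ) :=
              le_max_of_le_left (le_min (le_refl _) (h.trans (Nat.cast_nonneg n)))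
        · rw [max_eq_left h, max_eq_right (by linarith)]
          simp only [hvdef]
          calc min (llr P R ω) (n:ℝ) - 0 = min (llr P R ω) n := by ring
            _ ≤ _ := le_max_left _ _
      have key : (m n).toReal - C ≤ ∫ ω, u n ω ∂P := by
        rw [integral_congr_ae (huv n)]
        have h3 : ∫ ω, (min (max (llr P R ω) 0) (n : ℝ) - max (-(llr P R ω)) 0) ∂P
            ≤ ∫ ω, v n ω ∂P :=
          integral_mono (hminint.sub (integrable_negpart_llr hPR)) (hvint n)
            fun ω => hptwise ω
        rwa [integral_sub hminint (integrable_negpart_llr hPR), h2, ← hCdef] at h3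
      have hfinal : M < ∫ ω, u n ω ∂P - Real.log (Z n) := by
        have hlogZ : Real.log (Z n) ≤ Real.log 2 := Real.log_le_log (hZpos n) (hZle2 n)
        have hKM : M + C + Real.log 2 + 1 ≤ K := le_max_left _ _
        linarith
      calc b < (M : EReal) := hbM
        _ < _ := EReal.coe_lt_coe_iff.mpr hfinal
  · -- sSup ≤ relEntropy
    apply sSup_le
    rintro x ⟨u, hu, hexp, hneg, hx⟩
    by_cases hint : Integrable (llr P R) P
    · rw [relEntropy, if_pos ⟨hPR, hint⟩]
      obtain ⟨hui, hexp2, hZle⟩ := dv_core hPR hint hu hexp hneg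
      rw [hx, hval u hui _]
      apply EReal.coe_le_coe_iff.mpr
      have hgpos : 0 < ∫ ω, Real.exp (u ω - llr P R ω) ∂P := integral_exp_pos hexp2
      have hj := integral_le_log_integral_exp (show Integrable (fun ω => u ω - llr P R ω) P from hui.sub hint) hexp2
      rw [integral_sub hui hint] at hj
      have hlog : Real.log (∫ ω, Real.exp (u ω - llr P R ω) ∂P)
          ≤ Real.log (∫ ω, Real.exp (u ω) ∂ R) := Real.log_le_log hgpos hZle
      linarith
    · rw [relEntropy, if_neg (fun h => hint h.2)]
      exact le_top
end

section
/- Let R be a probability measure on a measurable space Ω and let P be a probability measure on Ω with P ≪ R and H(P|R) < ∞. Define u* : Ω → [−∞, ∞) by u* := log(dP/dR) on the set {dP/dR > 0} and u* := −∞ on {dP/dR = 0}, with the convention e^{−∞} = 0. Then ∫ e^{u*} dR = 1 and ∫ u* dP − log ∫ e^{u*} dR = H(P|R); in particular the supremum sup { ∫ u dP − log ∫ e^u dR : u : Ω → [−∞, ∞) measurable, ∫ e^u dR < ∞ } is attained at u*. -/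
open MeasureTheory Real Filter Classical
open scoped ENNReal

/-- The nonnegative part of an extended real number, valued in `ℝ≥0∞`
(`⊥ ↦ 0`, `⊤ ↦ ∞`, `x ↦ max x 0`). -/
noncomputable def erealPosPart : EReal → ℝ≥0∞
  | ⊥ => 0
  | ⊤ => ⊤
  | (x : ℝ) => ENNReal.ofReal x

/-- For a `[−∞,∞)`-valued function `u`, the integral `∫ u dP ∈ [−∞,∞]` encoded in
`EReal` as `∫⁻ u⁺ dP − ∫⁻ u⁻ dP`. -/
noncomputable def erealIntegral {Ω : Type*} [MeasurableSpace Ω] (P : Measure Ω)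
    (u : Ω → EReal) : EReal :=
  ((∫⁻ ω, erealPosPart (u ω) ∂P : ℝ≥0∞) : EReal)
    - ((∫⁻ ω, erealPosPart (-(u ω)) ∂P : ℝ≥0∞) : EReal)

/-- The optimizer `u* : Ω → [−∞,∞)`: `u* = log(dP/dR)` on `{dP/dR > 0}` and
`u* = −∞` on `{dP/dR = 0}`. -/
noncomputable def uStar {Ω : Type*} [MeasurableSpace Ω] (P R : Measure Ω) : Ω → EReal :=
  fun ω => if P.rnDeriv R ω = 0 then (⊥ : EReal)
    else ((Real.log ((P.rnDeriv R ω).toReal) : ℝ) : EReal)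

/-- For `P ≪ R` with `H(P|R) < ∞`, the function `u* = 𝟙_{dP/dR>0} log(dP/dR) − ∞·𝟙_{dP/dR=0}`
(so that `e^{u*} = dP/dR`) satisfies `∫ e^{u*} dR = 1` and
`∫ u* dP − log ∫ e^{u*} dR = H(P|R)`; in particular the supremum in the variational
representation of the entropy is attained at `u*`. -/
theorem uStar_attains_sup {Ω : Type*} [MeasurableSpace Ω]
    (P R : Measure Ω) [IsProbabilityMeasure P] [IsProbabilityMeasure R] (hPR : P ≪ R)
    (hH : relEntropy P R < ⊤) :
    (MeasureTheory.lintegral R (fun ω => (uStar P R ω).exp)) = 1 ∧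
    erealIntegral P (uStar P R) - ENNReal.log (MeasureTheory.lintegral R (fun ω => (uStar P R ω).exp))
      = relEntropy P R := by
  have hInt : Integrable (llr P R) P := by
    by_contra h
    rw [relEntropy, if_neg (fun hc => h hc.2)] at hH
    exact lt_irrefl _ hH
  have hfin : ∀ᵐ ω ∂ R, P.rnDeriv R ω < ⊤ := Measure.rnDeriv_lt_top P R
  have hexp : ∀ᵐ ω ∂ R, (uStar P R ω).exp = P.rnDeriv R ω := by
    filter_upwards [hfin] with ω hω
    unfold uStar
    by_cases h0 : P.rnDeriv R ω = 0
    · simp [h0]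
    · rw [if_neg h0, EReal.exp_coe, Real.exp_log (ENNReal.toReal_pos h0 hω.ne)]
      exact ENNReal.ofReal_toReal hω.ne
  have h1 : (∫⁻ ω, (uStar P R ω).exp ∂ R) = 1 := by
    rw [lintegral_congr_ae hexp, Measure.lintegral_rnDeriv hPR]
    simp
  refine ⟨h1, ?_⟩
  rw [h1, ENNReal.log_one]
  have hRE : relEntropy P R = ((∫ ω, llr P R ω ∂P : ℝ) : EReal) :=
    if_pos ⟨hPR, hInt⟩
  -- a.e. P, uStar = llr as EReal
  have hposP : ∀ᵐ ω ∂P, P.rnDeriv R ω ≠ 0 := by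
    filter_upwards [Measure.rnDeriv_pos hPR] with ω hω using hω.ne'
  have hu : ∀ᵐ ω ∂P, uStar P R ω = ((llr P R ω : ℝ) : EReal) := by
    filter_upwards [hposP] with ω hω
    rw [uStar, if_neg hω, llr_def]
  have hApos : (∫⁻ ω, erealPosPart (uStar P R ω) ∂P)
      = ∫⁻ ω, ENNReal.ofReal (llr P R ω) ∂P := by
    refine lintegral_congr_ae ?_
    filter_upwards [hu] with ω hω
    rw [hω]; rfl
  have hAneg : (∫⁻ ω, erealPosPart (-(uStar P R ω)) ∂P)
      = ∫⁻ ω, ENNReal.ofReal (-(llr P R ω)) ∂P := by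
    refine lintegral_congr_ae ?_
    filter_upwards [hu] with ω hω
    rw [hω, ← EReal.coe_neg]; rfl
  have hnorm : (∫⁻ ω, (‖llr P R ω‖₊ : ℝ≥0∞) ∂P) < ⊤ := hInt.2
  have hApos_lt : (∫⁻ ω, ENNReal.ofReal (llr P R ω) ∂P) < ⊤ := by
    refine lt_of_le_of_lt (lintegral_mono fun ω => ?_) hnorm
    rw [← enorm_eq_nnnorm, ← ofReal_norm (llr P R ω)]
    exact ENNReal.ofReal_le_ofReal ((le_abs_self _).trans_eq (Real.norm_eq_abs _).symm)
  have hAneg_lt : (∫⁻ ω, ENNReal.ofReal (-(llr P R ω)) ∂P) < ⊤ := by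
    refine lt_of_le_of_lt (lintegral_mono fun ω => ?_) hnorm
    rw [← enorm_eq_nnnorm, ← ofReal_norm (llr P R ω)]
    exact ENNReal.ofReal_le_ofReal ((neg_le_abs _).trans_eq (Real.norm_eq_abs _).symm)
  rw [erealIntegral, hApos, hAneg, hRE,
    integral_eq_lintegral_pos_part_sub_lintegral_neg_part hInt]
  set A := ∫⁻ ω, ENNReal.ofReal (llr P R ω) ∂P
  set B := ∫⁻ ω, ENNReal.ofReal (-(llr P R ω)) ∂P
  have hA : ((A : EReal)) = ((A.toReal : ℝ) : EReal) := by
    rw [← EReal.toReal_coe_ennreal]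
    exact (EReal.coe_toReal (by simp [A, hApos_lt.ne]) (by simp)).symm
  have hB : ((B : EReal)) = ((B.toReal : ℝ) : EReal) := by
    rw [← EReal.toReal_coe_ennreal]
    exact (EReal.coe_toReal (by simp [B, hAneg_lt.ne]) (by simp)).symm
  rw [hA, hB, ← EReal.coe_sub, sub_zero]
end

section
/- Let R be a probability measure on a measurable space Ω and let P be a probability measure on Ω with P ≪ R. Then H(P|R) = sup { ∫ u dP − ∫ (e^u − 1) dR : u : Ω → ℝ measurable, inf u > −∞ and ∫ e^u dR < ∞ } ∈ [0, ∞]. -/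
open MeasureTheory Real Filter Classical
open scoped ENNReal

section Aux

variable {Ω : Type*} [MeasurableSpace Ω] {P R : Measure Ω}

private lemma ennreal_coe_ereal_eq {a : ℝ≥0∞} (ha : a ≠ ⊤) :
    (a : EReal) = ((a.toReal : ℝ) : EReal) := by
  conv_lhs => rw [← ENNReal.ofReal_toReal ha]
  rw [EReal.coe_ennreal_ofReal, max_eq_left ENNReal.toReal_nonneg]

private lemma self_le_exp (x : ℝ) : x ≤ exp x := by
  have := Real.add_one_le_exp x; linarith

/-- Coding of the set elements as a real number when `u` is integrable. -/
private lemma elt_eq (P : Measure Ω) {u : Ω → ℝ} (hu : Integrable u P) (C : ℝ) :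
    ((∫⁻ ω, ENNReal.ofReal (u ω) ∂P : ℝ≥0∞) : EReal)
      - ((∫⁻ ω, ENNReal.ofReal (-(u ω)) ∂P : ℝ≥0∞) : EReal)
      - ((C : ℝ) : EReal)
      = ((∫ ω, u ω ∂P - C : ℝ) : EReal) := by
  have h1 : (∫⁻ ω, ENNReal.ofReal (u ω) ∂P) ≠ ⊤ :=
    (lt_of_le_of_lt (lintegral_mono fun ω => Real.ofReal_le_enorm _) hu.2).ne
  have h2 : (∫⁻ ω, ENNReal.ofReal (-(u ω)) ∂P) ≠ ⊤ := by
    refine (lt_of_le_of_lt (lintegral_mono fun ω => ?_) hu.2).ne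
    simpa using Real.ofReal_le_enorm (-(u ω))
  rw [integral_eq_lintegral_pos_part_sub_lintegral_neg_part hu,
    ennreal_coe_ereal_eq h1, ennreal_coe_ereal_eq h2, EReal.coe_sub, EReal.coe_sub]

/-- The key change-of-measure inequality: `∫⁻ e^{u - llr} dP ≤ ∫⁻ e^u dR`. -/
private lemma key_lintegral [SigmaFinite P] [SigmaFinite R] (hPR : P ≪ R) {u : Ω → ℝ} (hu : Measurable u) :
    ∫⁻ ω, ENNReal.ofReal (exp (u ω - llr P R ω)) ∂P
      ≤ ∫⁻ ω, ENNReal.ofReal (exp (u ω)) ∂ R := by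
  have hd : Measurable (P.rnDeriv R) := Measure.measurable_rnDeriv P R
  have hmeas : AEMeasurable (fun ω => ENNReal.ofReal (exp (u ω) * ((P.rnDeriv R ω).toReal)⁻¹)) R :=
    (ENNReal.measurable_ofReal.comp ((Real.measurable_exp.comp hu).mul
      hd.ennreal_toReal.inv)).aemeasurable
  have hae : ∀ᵐ ω ∂P, ENNReal.ofReal (exp (u ω - llr P R ω))
      = ENNReal.ofReal (exp (u ω) * ((P.rnDeriv R ω).toReal)⁻¹) := by
    filter_upwards [Measure.rnDeriv_pos hPR, hPR.ae_le (Measure.rnDeriv_lt_top P R)]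
      with ω h0 hlt
    rw [exp_sub, llr, exp_log (ENNReal.toReal_pos h0.ne' hlt.ne), div_eq_mul_inv]
  calc ∫⁻ ω, ENNReal.ofReal (exp (u ω - llr P R ω)) ∂P
      = ∫⁻ ω, ENNReal.ofReal (exp (u ω) * ((P.rnDeriv R ω).toReal)⁻¹) ∂P :=
        lintegral_congr_ae hae
    _ = ∫⁻ ω, P.rnDeriv R ω * ENNReal.ofReal (exp (u ω) * ((P.rnDeriv R ω).toReal)⁻¹) ∂ R :=
        (MeasureTheory.lintegral_rnDeriv_mul hPR hmeas).symm
    _ ≤ ∫⁻ ω, ENNReal.ofReal (exp (u ω)) ∂ R := by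
        refine lintegral_mono_ae ?_
        filter_upwards [Measure.rnDeriv_lt_top P R] with ω hlt
        rcases eq_or_ne (P.rnDeriv R ω) 0 with h0 | h0
        · simp [h0]
        · have htR : (P.rnDeriv R ω).toReal ≠ 0 := ENNReal.toReal_ne_zero.mpr ⟨h0, hlt.ne⟩
          set t := (P.rnDeriv R ω).toReal with ht
          have htnn : 0 ≤ t := ENNReal.toReal_nonneg
          rw [show P.rnDeriv R ω = ENNReal.ofReal t from (ENNReal.ofReal_toReal hlt.ne).symm,
            ← ENNReal.ofReal_mul htnn]
          apply ENNReal.ofReal_le_ofReal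
          rw [mul_comm (exp (u ω)), ← mul_assoc, mul_inv_cancel₀ htR, one_mul]

end Aux

/-- `H(P|R) = sup { ∫ u dP − ∫ (e^u − 1) dR : u measurable, inf u > −∞, ∫ e^u dR < ∞ }`.
For admissible `u`, `∫ u dP ∈ (−∞,∞]` is well-defined; it is encoded in `EReal` as
`∫⁻ u⁺ dP − ∫⁻ u⁻ dP`, where the subtracted (negative-part) term is finite since `u`
is bounded below. -/
theorem relEntropy_eq_sup_boundedBelow {Ω : Type*} [MeasurableSpace Ω]
    (P R : Measure Ω) [IsProbabilityMeasure P] [IsProbabilityMeasure R] (hPR : P ≪ R) :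
    relEntropy P R =
      sSup {x : EReal | ∃ u : Ω → ℝ, Measurable u ∧ (∃ c : ℝ, ∀ ω, c ≤ u ω) ∧
        Integrable (fun ω => Real.exp (u ω)) R ∧
        x = ((∫⁻ ω, ENNReal.ofReal (u ω) ∂P : ℝ≥0∞) : EReal)
              - ((∫⁻ ω, ENNReal.ofReal (-(u ω)) ∂P : ℝ≥0∞) : EReal)
              - ((MeasureTheory.integral R (fun ω => Real.exp (u ω) - 1) : ℝ) : EReal)} := by
  have hd : Measurable (P.rnDeriv R) := Measure.measurable_rnDeriv P R
  set S := {x : EReal | ∃ u : Ω → ℝ, Measurable u ∧ (∃ c : ℝ, ∀ ω, c ≤ u ω) ∧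
        Integrable (fun ω => Real.exp (u ω)) R ∧
        x = ((∫⁻ ω, ENNReal.ofReal (u ω) ∂P : ℝ≥0∞) : EReal)
              - ((∫⁻ ω, ENNReal.ofReal (-(u ω)) ∂P : ℝ≥0∞) : EReal)
              - ((∫ ω, (Real.exp (u ω) - 1) ∂ R : ℝ) : EReal)} with hS_def
  -- the truncated witnesses
  set w : ℝ → Ω → ℝ := fun c ω => if P.rnDeriv R ω = 0 then c else max (llr P R ω) c with hw_def
  have hw_meas : ∀ c, Measurable (w c) := fun c =>
    Measurable.ite (hd (measurableSet_singleton 0)) measurable_const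
      ((measurable_llr P R).max measurable_const)
  have hw_lb : ∀ c ω, c ≤ w c ω := by
    intro c ω; by_cases h0 : P.rnDeriv R ω = 0
    · simp [hw_def, h0]
    · simp [hw_def, h0, le_max_right]
  have hw_exple : ∀ c, ∀ᵐ ω ∂ R, exp (w c ω) ≤ (P.rnDeriv R ω).toReal + exp c := by
    intro c
    filter_upwards [Measure.rnDeriv_lt_top P R] with ω hlt
    by_cases h0 : P.rnDeriv R ω = 0
    · simp only [hw_def, h0, if_pos rfl]
      simp [h0]
    · simp only [hw_def, if_neg h0]
      rw [Real.exp_monotone.map_max]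
      have hexpllr : exp (llr P R ω) = (P.rnDeriv R ω).toReal :=
        exp_log (ENNReal.toReal_pos h0 hlt.ne)
      rw [hexpllr]
      exact max_le (le_add_of_nonneg_right (exp_pos c).le)
        (le_add_of_nonneg_left ENNReal.toReal_nonneg)
  have hw_expint : ∀ c, Integrable (fun ω => exp (w c ω)) R := by
    intro c
    refine Integrable.mono' ((Measure.integrable_toReal_rnDeriv (μ := P) (ν := R)).add (integrable_const (exp c)))
      (Real.measurable_exp.comp (hw_meas c)).aestronglyMeasurable ?_
    filter_upwards [hw_exple c] with ω hω
    rw [Real.norm_eq_abs, abs_of_nonneg (exp_pos _).le]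
    exact hω
  have hw_aeP : ∀ c, w c =ᵐ[P] fun ω => max (llr P R ω) c := by
    intro c
    filter_upwards [Measure.rnDeriv_pos hPR] with ω h0
    simp [hw_def, h0.ne']
  have hw_intR : ∀ c, ∫ ω, (exp (w c ω) - 1) ∂ R ≤ exp c := by
    intro c
    have h1 : ∫ ω, (exp (w c ω) - 1) ∂ R
        ≤ ∫ ω, ((P.rnDeriv R ω).toReal + exp c - 1) ∂ R := by
      refine integral_mono_ae ((hw_expint c).sub (integrable_const 1))
        (((Measure.integrable_toReal_rnDeriv (μ := P) (ν := R)).add (integrable_const (exp c))).sub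
          (integrable_const 1)) ?_
      filter_upwards [hw_exple c] with ω hω
      simpa using sub_le_sub_right hω 1
    have h2 : ∫ ω, ((P.rnDeriv R ω).toReal + exp c - 1) ∂ R = exp c := by
      have heq : ∀ ω, (P.rnDeriv R ω).toReal + exp c - 1
          = (P.rnDeriv R ω).toReal + (exp c - 1) := fun ω => by ring
      simp_rw [heq]
      rw [integral_add (Measure.integrable_toReal_rnDeriv (μ := P) (ν := R))
          (integrable_const (exp c - 1)), Measure.integral_toReal_rnDeriv hPR]
      simp [measure_univ]
    linarith [h1, h2.le]
  -- the negative part of llr has finite lintegral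
  have hneg : ∫⁻ ω, ENNReal.ofReal (-(llr P R ω)) ∂P < ⊤ := by
    have h0 : ∫⁻ ω, ENNReal.ofReal (exp ((0:ℝ) - llr P R ω)) ∂P
        ≤ ∫⁻ ω, ENNReal.ofReal (exp ((fun _ : Ω => (0:ℝ)) ω)) ∂ R :=
      key_lintegral hPR measurable_const
    simp only [Real.exp_zero, ENNReal.ofReal_one, lintegral_one, measure_univ, zero_sub] at h0
    refine lt_of_le_of_lt (lintegral_mono fun ω => ?_) (lt_of_le_of_lt h0 ENNReal.one_lt_top)
    exact ENNReal.ofReal_le_ofReal (self_le_exp _)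
  by_cases hint : Integrable (llr P R) P
  · -- finite entropy case
    rw [relEntropy, if_pos ⟨hPR, hint⟩]
    apply le_antisymm
    · -- H ≤ sSup via the truncations w (-n)
      have hwP_int : ∀ c : ℝ, Integrable (w c) P := by
        intro c
        exact (hint.sup (integrable_const c)).congr (hw_aeP c).symm
      have hstep : ∀ n : ℕ, ((∫ ω, llr P R ω ∂P - exp (-(n:ℝ)) : ℝ) : EReal) ≤ sSup S := by
        intro n
        set c : ℝ := -(n:ℝ)
        have hmem : ((∫ ω, w c ω ∂P - ∫ ω, (exp (w c ω) - 1) ∂ R : ℝ) : EReal) ∈ S :=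
          ⟨w c, hw_meas c, ⟨c, hw_lb c⟩, hw_expint c, (elt_eq P (hwP_int c) _).symm⟩
        refine le_trans ?_ (le_sSup hmem)
        rw [EReal.coe_le_coe_iff]
        have hmono : ∫ ω, llr P R ω ∂P ≤ ∫ ω, w c ω ∂P := by
          refine integral_mono_ae hint (hwP_int c) ?_
          filter_upwards [hw_aeP c] with ω hω
          rw [hω]; exact le_max_left _ _
        linarith [hw_intR c, hmono]
      refine le_of_tendsto' (x := atTop) ?_ hstep
      rw [show ((∫ ω, llr P R ω ∂P : ℝ) : EReal)
          = ((∫ ω, llr P R ω ∂P - 0 : ℝ) : EReal) by norm_num]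
      refine EReal.tendsto_coe.2 ?_
      exact tendsto_const_nhds.sub
        (Real.tendsto_exp_neg_atTop_nhds_zero.comp tendsto_natCast_atTop_atTop)
    · -- sSup ≤ H
      refine sSup_le ?_
      rintro x ⟨u, hum, ⟨c, hc⟩, hexp, rfl⟩
      have hexp_nonneg : 0 ≤ᵐ[R] fun ω => exp (u ω) :=
        Filter.Eventually.of_forall fun ω => (exp_pos (u ω)).le
      have hkey := key_lintegral hPR hum
      have hRfin : ∫⁻ ω, ENNReal.ofReal (exp (u ω)) ∂ R ≠ ⊤ := by
        rw [← ofReal_integral_eq_lintegral_ofReal hexp hexp_nonneg]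
        exact ENNReal.ofReal_ne_top
      have hexpP_fin : ∫⁻ ω, ENNReal.ofReal (exp (u ω - llr P R ω)) ∂P < ⊤ :=
        lt_of_le_of_lt hkey (lt_top_iff_ne_top.2 hRfin)
      have hllr_fin : ∫⁻ ω, ENNReal.ofReal (llr P R ω) ∂P < ⊤ :=
        lt_of_le_of_lt (lintegral_mono fun ω => Real.ofReal_le_enorm _) hint.2
      have hA : ∫⁻ ω, ENNReal.ofReal (u ω) ∂P < ⊤ := by
        have hle : ∀ ω, ENNReal.ofReal (u ω)
            ≤ ENNReal.ofReal (llr P R ω) + ENNReal.ofReal (exp (u ω - llr P R ω)) := by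
          intro ω
          refine le_trans (ENNReal.ofReal_le_ofReal ?_) (ENNReal.ofReal_add_le)
          have := self_le_exp (u ω - llr P R ω)
          linarith
        calc ∫⁻ ω, ENNReal.ofReal (u ω) ∂P
            ≤ ∫⁻ ω, (ENNReal.ofReal (llr P R ω) + ENNReal.ofReal (exp (u ω - llr P R ω))) ∂P :=
              lintegral_mono hle
          _ = (∫⁻ ω, ENNReal.ofReal (llr P R ω) ∂P)
              + ∫⁻ ω, ENNReal.ofReal (exp (u ω - llr P R ω)) ∂P :=
              lintegral_add_left ((measurable_llr P R).ennreal_ofReal) _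
          _ < ⊤ := ENNReal.add_lt_top.2 ⟨hllr_fin, hexpP_fin⟩
      have hB : ∫⁻ ω, ENNReal.ofReal (-(u ω)) ∂P < ⊤ := by
        calc ∫⁻ ω, ENNReal.ofReal (-(u ω)) ∂P
            ≤ ∫⁻ _, ENNReal.ofReal (-c) ∂P :=
              lintegral_mono fun ω => ENNReal.ofReal_le_ofReal (neg_le_neg (hc ω))
          _ = ENNReal.ofReal (-c) := by simp [measure_univ]
          _ < ⊤ := ENNReal.ofReal_lt_top
      have hu_int : Integrable u P := by
        refine ⟨hum.aestronglyMeasurable, ?_⟩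
        have hle : ∀ ω, ‖u ω‖ₑ
            ≤ ENNReal.ofReal (u ω) + ENNReal.ofReal (-(u ω)) := by
          intro ω
          rw [Real.enorm_eq_ofReal_abs]
          rcases le_total 0 (u ω) with h | h
          · rw [abs_of_nonneg h]; exact self_le_add_right _ _
          · rw [abs_of_nonpos h]; exact le_add_self
        refine lt_of_le_of_lt (lintegral_mono hle) ?_
        rw [lintegral_add_left (hum.ennreal_ofReal)]
        exact ENNReal.add_lt_top.2 ⟨hA, hB⟩
      rw [elt_eq P hu_int, EReal.coe_le_coe_iff]
      -- real inequality
      have h_exp_int : Integrable (fun ω => exp (u ω - llr P R ω)) P := by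
        refine ⟨(Real.measurable_exp.comp (hum.sub (measurable_llr P R))).aestronglyMeasurable, ?_⟩
        have : ∀ ω, ‖exp (u ω - llr P R ω)‖ₑ
            = ENNReal.ofReal (exp (u ω - llr P R ω)) := fun ω =>
          Real.enorm_eq_ofReal (exp_pos _).le
        unfold HasFiniteIntegral
        simpa only [this] using hexpP_fin
      have hle2 : ∫ ω, exp (u ω - llr P R ω) ∂P ≤ ∫ ω, exp (u ω) ∂ R := by
        have h1 := ofReal_integral_eq_lintegral_ofReal h_exp_int
          (Filter.Eventually.of_forall fun ω => (exp_pos _).le)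
        have h2 := ofReal_integral_eq_lintegral_ofReal hexp hexp_nonneg
        have h3 : ENNReal.ofReal (∫ ω, exp (u ω - llr P R ω) ∂P)
            ≤ ENNReal.ofReal (∫ ω, exp (u ω) ∂ R) := by rw [h1, h2]; exact hkey
        exact (ENNReal.ofReal_le_ofReal_iff
          (integral_nonneg fun ω => (exp_pos _).le)).1 h3
      have hmono2 : ∫ ω, (u ω - llr P R ω) ∂P
          ≤ ∫ ω, (exp (u ω - llr P R ω) - 1) ∂P := by
        refine integral_mono (hu_int.sub hint) (h_exp_int.sub (integrable_const 1)) fun ω => ?_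
        have := Real.add_one_le_exp (u ω - llr P R ω)
        simp only
        linarith
      rw [integral_sub hu_int hint] at hmono2
      rw [integral_sub h_exp_int (integrable_const 1)] at hmono2
      have hconstR : ∫ ω, (exp (u ω) - 1) ∂ R = ∫ ω, exp (u ω) ∂ R - 1 := by
        rw [integral_sub hexp (integrable_const 1)]
        simp [measure_univ]
      simp only [integral_const, measure_univ, probReal_univ, ENNReal.toReal_one, smul_eq_mul, one_mul]
        at hmono2
      rw [hconstR]
      linarith
  · -- infinite entropy case: ⊤ is attained by u = max (llr) 0 = w 0
    rw [relEntropy, if_neg (fun h => hint h.2)]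
    have hllr_top : ∫⁻ ω, ENNReal.ofReal (llr P R ω) ∂P = ⊤ := by
      by_contra hA
      refine hint ⟨(measurable_llr P R).aestronglyMeasurable, ?_⟩
      have hle : ∀ ω, ‖llr P R ω‖ₑ
          ≤ ENNReal.ofReal (llr P R ω) + ENNReal.ofReal (-(llr P R ω)) := by
        intro ω
        rw [Real.enorm_eq_ofReal_abs]
        rcases le_total 0 (llr P R ω) with h | h
        · rw [abs_of_nonneg h]; exact le_add_self.trans_eq (add_comm _ _)
        · rw [abs_of_nonpos h]; exact le_add_self
      refine lt_of_le_of_lt (lintegral_mono hle) ?_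
      rw [lintegral_add_left ((measurable_llr P R).ennreal_ofReal)]
      exact ENNReal.add_lt_top.2 ⟨lt_top_iff_ne_top.2 hA, hneg⟩
    have hw0_pos : ∫⁻ ω, ENNReal.ofReal (w 0 ω) ∂P = ⊤ := by
      rw [eq_top_iff, ← hllr_top]
      refine lintegral_mono_ae ?_
      filter_upwards [hw_aeP 0] with ω hω
      rw [hω]
      exact ENNReal.ofReal_le_ofReal (le_max_left _ _)
    have hw0_neg : ∫⁻ ω, ENNReal.ofReal (-(w 0 ω)) ∂P = 0 := by
      rw [← lintegral_zero]
      refine lintegral_congr fun ω => ?_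
      rw [ENNReal.ofReal_eq_zero]
      simpa using hw_lb 0 ω
    have htop_mem : (⊤ : EReal) ∈ S := by
      refine ⟨w 0, hw_meas 0, ⟨0, hw_lb 0⟩, hw_expint 0, ?_⟩
      rw [hw0_pos, hw0_neg, EReal.coe_ennreal_top, EReal.coe_ennreal_zero,
        ← EReal.coe_zero, EReal.top_sub_coe, EReal.top_sub_coe]
    exact (le_antisymm le_top (le_sSup htop_mem)).symm
end

section
/- Let μ be a measure on a measurable space and let ℓ be a measurable function with values in [0, ∞). Define θ*(b) := (b+1)·log(b+1) − b for b ≥ 0. Then ∫ θ*(|ℓ − 1|) dμ < ∞ if and only if both ∫ 𝟙_{{ℓ ≤ 2}} (ℓ − 1)² dμ < ∞ and ∫ 𝟙_{{ℓ > 2}} ℓ·log ℓ dμ < ∞. -/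
open MeasureTheory
open scoped ENNReal

lemma key1 (b : ℝ) (hb : 0 ≤ b) :
    (Real.sqrt (1+b) - 1)^2 ≤ (b+1)*Real.log (b+1) - b := by
  set s := Real.sqrt (1+b) with hsdef
  have h1 : s^2 = 1+b := Real.sq_sqrt (by linarith)
  have hs0 : 0 ≤ s := Real.sqrt_nonneg _
  have hs1 : 1 ≤ s := by nlinarith
  have hspos : 0 < s := by linarith
  have hlog : Real.log (b+1) = 2 * Real.log s := by
    rw [show b+1 = s^2 by linarith, Real.log_pow]; push_cast; ring
  have h2 : 1 - s⁻¹ ≤ Real.log s := Real.one_sub_inv_le_log_of_pos hspos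
  have h4 : s^2 * s⁻¹ = s := by field_simp [pow_two]
  rw [hlog]
  nlinarith [mul_le_mul_of_nonneg_left h2 (show (0:ℝ) ≤ 2*s^2 by positivity)]

lemma key2 (b : ℝ) (hb : 1 ≤ b) :
    b ≤ 6 * ((b+1)*Real.log (b+1) - b) := by
  have h := key1 b (by linarith)
  set s := Real.sqrt (1+b) with hsdef
  have h1 : s^2 = 1+b := Real.sq_sqrt (by linarith)
  have hs0 : 0 ≤ s := Real.sqrt_nonneg _
  have hs : 7/5 ≤ s := by nlinarith
  nlinarith [sq_nonneg (s-1)]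

lemma key3 (b : ℝ) (hb0 : 0 ≤ b) (hb : b ≤ 1) :
    b^2 ≤ 6 * ((b+1)*Real.log (b+1) - b) := by
  have h := key1 b hb0
  set s := Real.sqrt (1+b) with hsdef
  have h1 : s^2 = 1+b := Real.sq_sqrt (by linarith)
  have hs0 : 0 ≤ s := Real.sqrt_nonneg _
  have hs1 : 1 ≤ s := by nlinarith
  have hs2 : s ≤ 3/2 := by nlinarith
  nlinarith [sq_nonneg (s-1), mul_nonneg (sq_nonneg (s-1)) (show (0:ℝ) ≤ 6 - (s+1)^2 by nlinarith)]

lemma key4 (b : ℝ) (hb : 0 ≤ b) :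
    (b+1)*Real.log (b+1) - b ≤ b^2 := by
  have h := Real.log_le_sub_one_of_pos (show (0:ℝ) < b+1 by linarith)
  nlinarith

lemma key0 (b : ℝ) (hb : 0 ≤ b) : 0 ≤ (b+1)*Real.log (b+1) - b :=
  le_trans (sq_nonneg _) (key1 b hb)

/-- Let `μ` be a (possibly infinite) measure and `ℓ` a measurable `[0,∞)`-valued
function. With `θ*(b) = (b+1) log (b+1) − b` for `b ≥ 0`:
`∫ θ*(|ℓ−1|) dμ < ∞` if and only if `∫ 𝟙_{ℓ≤2} (ℓ−1)² dμ < ∞` and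
`∫ 𝟙_{ℓ>2} ℓ log ℓ dμ < ∞`. -/
theorem thetaStar_integrable_iff {α : Type*} [MeasurableSpace α] (μ : Measure α)
    (ℓ : α → ℝ) (hmeas : Measurable ℓ) (hnonneg : ∀ x, 0 ≤ ℓ x) :
    (∫⁻ x, ENNReal.ofReal
        ((|ℓ x - 1| + 1) * Real.log (|ℓ x - 1| + 1) - |ℓ x - 1|) ∂μ) < ⊤ ↔
      ((∫⁻ x, ENNReal.ofReal (if ℓ x ≤ 2 then (ℓ x - 1) ^ 2 else 0) ∂μ) < ⊤ ∧
       (∫⁻ x, ENNReal.ofReal (if 2 < ℓ x then ℓ x * Real.log (ℓ x) else 0) ∂μ) < ⊤) := by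
  set F : α → ℝ := fun x => (|ℓ x - 1| + 1) * Real.log (|ℓ x - 1| + 1) - |ℓ x - 1| with hFdef
  set G : α → ℝ := fun x => if ℓ x ≤ 2 then (ℓ x - 1) ^ 2 else 0 with hGdef
  set H : α → ℝ := fun x => if 2 < ℓ x then ℓ x * Real.log (ℓ x) else 0 with hHdef
  have hFnn : ∀ x, 0 ≤ F x := fun x => key0 _ (abs_nonneg _)
  have hGF : ∀ x, G x ≤ 6 * F x := by
    intro x
    simp only [hGdef, hFdef]
    by_cases h : ℓ x ≤ 2
    · rw [if_pos h, ← sq_abs]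
      exact key3 _ (abs_nonneg _) (abs_le.mpr ⟨by linarith [hnonneg x], by linarith⟩)
    · rw [if_neg h]
      have := key0 (|ℓ x - 1|) (abs_nonneg (ℓ x - 1))
      linarith
  have hHF : ∀ x, H x ≤ 7 * F x := by
    intro x
    simp only [hHdef, hFdef]
    by_cases h : 2 < ℓ x
    · rw [if_pos h, show |ℓ x - 1| = ℓ x - 1 from abs_of_nonneg (by linarith),
        show ℓ x - 1 + 1 = ℓ x from by ring]
      have := key2 (ℓ x - 1) (by linarith)
      rw [show ℓ x - 1 + 1 = ℓ x from by ring] at this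
      linarith
    · rw [if_neg h]
      have := key0 (|ℓ x - 1|) (abs_nonneg (ℓ x - 1))
      linarith
  have hFGH : ∀ x, F x ≤ G x + H x := by
    intro x
    simp only [hGdef, hHdef, hFdef]
    by_cases h : ℓ x ≤ 2
    · rw [if_pos h, if_neg (not_lt.mpr h)]
      have := key4 |ℓ x - 1| (abs_nonneg _)
      rw [sq_abs] at this
      linarith
    · push_neg at h
      rw [if_neg (not_le.mpr h), if_pos h,
        show |ℓ x - 1| = ℓ x - 1 from abs_of_nonneg (by linarith),
        show ℓ x - 1 + 1 = ℓ x from by ring]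
      linarith
  have hGm : Measurable fun x => ENNReal.ofReal (G x) := by
    apply Measurable.ennreal_ofReal
    exact Measurable.ite (measurableSet_le hmeas measurable_const)
      ((hmeas.sub measurable_const).pow_const 2) measurable_const
  constructor
  · intro hF
    constructor
    · have hle : (∫⁻ x, ENNReal.ofReal (G x) ∂μ)
          ≤ ENNReal.ofReal 6 * ∫⁻ x, ENNReal.ofReal (F x) ∂μ := by
        rw [← lintegral_const_mul' _ _ ENNReal.ofReal_ne_top]
        apply lintegral_mono
        intro x
        dsimp only
        rw [← ENNReal.ofReal_mul (show (0:ℝ) ≤ 6 by norm_num)]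
        exact ENNReal.ofReal_le_ofReal (hGF x)
      exact lt_of_le_of_lt hle (ENNReal.mul_lt_top ENNReal.ofReal_lt_top hF)
    · have hle : (∫⁻ x, ENNReal.ofReal (H x) ∂μ)
          ≤ ENNReal.ofReal 7 * ∫⁻ x, ENNReal.ofReal (F x) ∂μ := by
        rw [← lintegral_const_mul' _ _ ENNReal.ofReal_ne_top]
        apply lintegral_mono
        intro x
        dsimp only
        rw [← ENNReal.ofReal_mul (show (0:ℝ) ≤ 7 by norm_num)]
        exact ENNReal.ofReal_le_ofReal (hHF x)
      exact lt_of_le_of_lt hle (ENNReal.mul_lt_top ENNReal.ofReal_lt_top hF)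
  · rintro ⟨hG, hH⟩
    have hle : (∫⁻ x, ENNReal.ofReal (F x) ∂μ)
        ≤ (∫⁻ x, ENNReal.ofReal (G x) ∂μ) + ∫⁻ x, ENNReal.ofReal (H x) ∂μ := by
      rw [← lintegral_add_left hGm]
      apply lintegral_mono
      intro x
      exact le_trans (ENNReal.ofReal_le_ofReal (hFGH x)) ENNReal.ofReal_add_le
    exact lt_of_le_of_lt hle (ENNReal.add_lt_top.mpr ⟨hG, hH⟩)
end
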